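/- arXiv:0909.1270 — 5 statements merged into one kernel-verified Lean document; each statement's English description precedes it below -/
import Mathlib

section
/- Define S(r) = 2·Σ_{n : aₙ rⁿ ≥ 1} log(aₙ rⁿ) for a log-concave positive coefficient sequence (aₙ) with a₀ = 1. Then (N₁(r) - 1)·log μ(r) ≤ S(r) ≤ 2·N₁(r)·log μ(r), where N₁(r) = #{n : aₙ rⁿ ≥ 1} and μ(r) = maxₙ aₙ rⁿ. -/
open Filter Finset

/-- Chord inequality for concave sequences. -/
lemma concave_chord {b : ℕ → ℝ} (hconc : ∀ n, b (n + 2) + b n ≤ 2 * b (n + 1))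
    {i k j : ℕ} (hik : i ≤ k) (hkj : k ≤ j) :
    ((j : ℝ) - k) * b i + ((k : ℝ) - i) * b j ≤ ((j : ℝ) - i) * b k := by
  set d : ℕ → ℝ := fun t => b (t + 1) - b t with hd
  have hanti : Antitone d := antitone_nat_of_succ_le (fun n => by
    have := hconc n; simp only [hd]; linarith)
  have htel : ∀ {p q : ℕ}, p ≤ q → (∑ t ∈ Ico p q, d t) = b q - b p := by
    intro p q hpq
    rw [Finset.sum_Ico_eq_sub _ hpq]
    simp [hd, Finset.sum_range_sub (fun t => b t)]
  have key : ((k : ℝ) - i) * (b j - b k) ≤ ((j : ℝ) - k) * (b k - b i) := by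
    rw [← htel hik, ← htel hkj]
    have h1 : ((k : ℝ) - i) = ((Ico i k).card : ℝ) := by
      rw [Nat.card_Ico]; rw [Nat.cast_sub hik]
    have h2 : ((j : ℝ) - k) = ((Ico k j).card : ℝ) := by
      rw [Nat.card_Ico]; rw [Nat.cast_sub hkj]
    rw [h1, h2]
    have e1 : ((Ico i k).card : ℝ) * (∑ s ∈ Ico k j, d s)
        = ∑ t ∈ Ico i k, ∑ s ∈ Ico k j, d s := by
      rw [Finset.sum_const, nsmul_eq_mul]
    have e2 : ((Ico k j).card : ℝ) * (∑ t ∈ Ico i k, d t)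
        = ∑ t ∈ Ico i k, ∑ s ∈ Ico k j, d t := by
      rw [Finset.mul_sum]
      refine Finset.sum_congr rfl fun t _ => ?_
      rw [Finset.sum_const, nsmul_eq_mul]
    rw [e1, e2]
    refine Finset.sum_le_sum fun t ht => Finset.sum_le_sum fun s hs => ?_
    exact hanti (le_trans (le_of_lt (Finset.mem_Ico.1 ht).2) (Finset.mem_Ico.1 hs).1)
  nlinarith [key]

/-- For a log-concave positive coefficient sequence with `a₀ = 1`, the quantity
`S(r) = 2 Σ_{n : aₙ rⁿ ≥ 1} log (aₙ rⁿ)` satisfies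
`(N₁(r) - 1) log μ(r) ≤ S(r) ≤ 2 N₁(r) log μ(r)`. -/
theorem stmt7 (a : ℕ → ℝ) (ha : ∀ n, 0 < a n) (ha0 : a 0 = 1)
    (hlogconc : ∀ n : ℕ, a n * a (n + 2) ≤ a (n + 1) ^ 2)
    (hdecay : Tendsto (fun n : ℕ => Real.log (a n) / n) atTop atBot)
    (r : ℝ) (hr : 1 ≤ r)
    (μ : ℝ) (hμmax : ∀ n : ℕ, a n * r ^ n ≤ μ) (hμatt : ∃ n : ℕ, a n * r ^ n = μ)
    (N₁ : Set ℕ) (hN₁ : N₁ = {n : ℕ | 1 ≤ a n * r ^ n})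
    (S : ℝ)
    (hS : S = 2 * ∑' n : ℕ, Set.indicator N₁ (fun n => Real.log (a n * r ^ n)) n) :
    ((N₁.ncard : ℝ) - 1) * Real.log μ ≤ S ∧ S ≤ 2 * (N₁.ncard : ℝ) * Real.log μ := by
  have hr0 : (0 : ℝ) < r := lt_of_lt_of_le one_pos hr
  set b : ℕ → ℝ := fun n => Real.log (a n * r ^ n) with hb
  have hpos : ∀ n, 0 < a n * r ^ n := fun n => mul_pos (ha n) (pow_pos hr0 n)
  have hmem : ∀ n, n ∈ N₁ ↔ 0 ≤ b n := by
    intro n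
    rw [hN₁]
    simp only [Set.mem_setOf_eq, hb]
    exact (Real.log_nonneg_iff (hpos n)).symm
  have hb0 : b 0 = 0 := by simp [hb, ha0]
  -- concavity of b
  have hconc : ∀ n, b (n + 2) + b n ≤ 2 * b (n + 1) := by
    intro n
    have h1 : b (n + 2) + b n = Real.log ((a (n + 2) * r ^ (n + 2)) * (a n * r ^ n)) :=
      (Real.log_mul (ne_of_gt (hpos _)) (ne_of_gt (hpos _))).symm
    have h2 : 2 * b (n + 1) = Real.log ((a (n + 1) * r ^ (n + 1)) * (a (n + 1) * r ^ (n + 1))) := by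
      rw [Real.log_mul (ne_of_gt (hpos _)) (ne_of_gt (hpos _))]; ring
    rw [h1, h2]
    apply Real.log_le_log (mul_pos (hpos _) (hpos _))
    have e1 : (a (n + 2) * r ^ (n + 2)) * (a n * r ^ n) = (a n * a (n + 2)) * (r ^ (n + 1)) ^ 2 := by
      ring
    have e2 : (a (n + 1) * r ^ (n + 1)) * (a (n + 1) * r ^ (n + 1))
        = a (n + 1) ^ 2 * (r ^ (n + 1)) ^ 2 := by ring
    rw [e1, e2]
    exact mul_le_mul_of_nonneg_right (hlogconc n) (sq_nonneg _)
  -- eventually b n < 0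
  obtain ⟨M₀, hM₀⟩ := (hdecay.eventually (eventually_le_atBot (-(Real.log r + 1)))).exists_forall_of_atTop
  have hbig : ∀ n : ℕ, max M₀ 1 ≤ n → b n < 0 := by
    intro n hn
    have hn1 : 1 ≤ n := le_trans (le_max_right _ _) hn
    have hnM : M₀ ≤ n := le_trans (le_max_left _ _) hn
    have h := hM₀ n hnM
    have hnpos : (0 : ℝ) < n := by exact_mod_cast hn1
    have hlog : Real.log (a n) ≤ n * (-(Real.log r + 1)) := by
      rw [div_le_iff₀ hnpos] at h
      linarith [h]
    have hbn : b n = Real.log (a n) + n * Real.log r := by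
      simp [hb, Real.log_mul (ne_of_gt (ha n)) (ne_of_gt (pow_pos hr0 n)), Real.log_pow]
    rw [hbn]
    nlinarith [hlog, hnpos]
  -- N₁ is finite
  have hfin : N₁.Finite := by
    apply Set.Finite.subset (Set.finite_Iio (max M₀ 1))
    intro n hn
    by_contra hcon
    have : max M₀ 1 ≤ n := not_lt.1 hcon
    exact absurd ((hmem n).1 hn) (not_le.2 (hbig n this))
  have h0mem : 0 ∈ N₁ := (hmem 0).2 (le_of_eq hb0.symm)
  have hne : hfin.toFinset.Nonempty := ⟨0, hfin.mem_toFinset.2 h0mem⟩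
  obtain ⟨m, hmmem, hle_m⟩ : ∃ m, m ∈ N₁ ∧ ∀ n ∈ N₁, n ≤ m :=
    ⟨hfin.toFinset.max' hne, hfin.mem_toFinset.1 (hfin.toFinset.max'_mem hne),
      fun n hn => hfin.toFinset.le_max' n (hfin.mem_toFinset.2 hn)⟩
  have hbm : 0 ≤ b m := (hmem m).1 hmmem
  -- every n ≤ m is in N₁
  have hfull : ∀ n, n ≤ m → 0 ≤ b n := by
    intro n hn
    rcases Nat.eq_zero_or_pos m with hm0 | hmpos
    · have : n = 0 := by omega
      rw [this, hb0]
    · have hch := concave_chord hconc (Nat.zero_le n) hn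
      rw [hb0] at hch
      push_cast at hch
      have hmR : (0 : ℝ) < m := by exact_mod_cast hmpos
      have hnn : (0 : ℝ) ≤ (n : ℝ) := Nat.cast_nonneg n
      exact le_of_mul_le_mul_left (by linarith [hch, mul_nonneg hnn hbm] :
        (m : ℝ) * 0 ≤ (m : ℝ) * b n) hmR
  have hset : N₁ = ↑(Finset.range (m + 1)) := by
    ext n
    simp only [Finset.coe_range, Set.mem_Iio, Nat.lt_succ_iff]
    exact ⟨fun hn => hle_m n hn, fun hn => (hmem n).2 (hfull n hn)⟩
  have hncard : N₁.ncard = m + 1 := by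
    rw [hset, Set.ncard_coe_finset, Finset.card_range]
  -- the tsum equals a finite sum
  set T : ℝ := ∑ n ∈ Finset.range (m + 1), b n with hT
  have htsum : (∑' n : ℕ, Set.indicator N₁ b n) = T := by
    rw [tsum_eq_sum (s := Finset.range (m + 1)) (fun n hn => by
      apply Set.indicator_of_notMem
      rw [hset]
      simpa using hn)]
    exact Finset.sum_congr rfl fun n hn => Set.indicator_of_mem (by rw [hset]; exact hn) _
  -- log μ bounds
  set M : ℝ := Real.log μ with hM
  have hμ1 : 1 ≤ μ := by have := hμmax 0; rwa [ha0, pow_zero, mul_one] at this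
  have hM0 : 0 ≤ M := Real.log_nonneg hμ1
  have hble : ∀ n, b n ≤ M := fun n => Real.log_le_log (hpos n) (hμmax n)
  constructor
  · -- lower bound
    obtain ⟨ν, hν⟩ := hμatt
    have hbν : b ν = M := by rw [hb]; simp only []; rw [hν]
    have hνm : ν ≤ m := hle_m ν ((hmem ν).2 (by rw [hbν]; exact hM0))
    -- first chord sum
    have sum1 : ((ν : ℝ) + 1) * M ≤ 2 * ∑ n ∈ Finset.range (ν + 1), b n := by
      rcases Nat.eq_zero_or_pos ν with hν0 | hνpos
      · subst hν0
        have : M = 0 := by rw [← hbν, hb0]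
        simp [this, hb0]
      · have hpair : ∀ n ∈ Finset.range (ν + 1), M ≤ b n + b (ν - n) := by
          intro n hn
          have hn' : n ≤ ν := Nat.lt_succ_iff.1 (Finset.mem_range.1 hn)
          have h1 := concave_chord hconc (Nat.zero_le n) hn'
          have h2 := concave_chord hconc (Nat.zero_le (ν - n)) (Nat.sub_le ν n)
          rw [hb0, hbν] at h1 h2
          push_cast at h1 h2
          have hcast : ((ν - n : ℕ) : ℝ) = (ν : ℝ) - n := by
            rw [Nat.cast_sub hn']
          rw [hcast] at h2
          have hνR : (0 : ℝ) < ν := by exact_mod_cast hνpos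
          exact le_of_mul_le_mul_left (by linarith [h1, h2] :
            (ν : ℝ) * M ≤ (ν : ℝ) * (b n + b (ν - n))) hνR
        calc ((ν : ℝ) + 1) * M = ∑ _n ∈ Finset.range (ν + 1), M := by
              rw [Finset.sum_const, Finset.card_range, nsmul_eq_mul]; push_cast; ring
          _ ≤ ∑ n ∈ Finset.range (ν + 1), (b n + b (ν - n)) := Finset.sum_le_sum hpair
          _ = (∑ n ∈ Finset.range (ν + 1), b n) + ∑ n ∈ Finset.range (ν + 1), b (ν - n) := by
              rw [Finset.sum_add_distrib]
          _ = 2 * ∑ n ∈ Finset.range (ν + 1), b n := by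
              have := Finset.sum_range_reflect (fun j => b j) (ν + 1)
              simp only [Nat.add_sub_cancel] at this
              rw [this]; ring
    -- second chord sum
    obtain ⟨L, hLν⟩ : ∃ L, ν + L = m := ⟨m - ν, by omega⟩
    have sum2 : ((L : ℝ) + 1) * M ≤ 2 * ∑ n ∈ Finset.Ico ν (m + 1), b n := by
      have hIco : (∑ n ∈ Finset.Ico ν (m + 1), b n)
          = ∑ j ∈ Finset.range (L + 1), b (ν + j) := by
        rw [Finset.sum_Ico_eq_sum_range]
        have he : m + 1 - ν = L + 1 := by omega
        rw [he]
      rw [hIco]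
      rcases Nat.eq_zero_or_pos L with hL0 | hLpos
      · have hbsum : (∑ j ∈ Finset.range (L + 1), b (ν + j)) = M := by
          rw [hL0, Finset.sum_range_one, Nat.add_zero, hbν]
        rw [hbsum, hL0]
        push_cast
        linarith [hM0]
      · have hpair : ∀ j ∈ Finset.range (L + 1), M ≤ b (ν + j) + b (ν + (L - j)) := by
          intro j hj
          have hj' : j ≤ L := Nat.lt_succ_iff.1 (Finset.mem_range.1 hj)
          have hk1 : ν ≤ ν + j := Nat.le_add_right _ _
          have hk1' : ν + j ≤ m := by omega
          have hk2 : ν ≤ ν + (L - j) := Nat.le_add_right _ _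
          have hk2' : ν + (L - j) ≤ m := by omega
          have h1 := concave_chord hconc hk1 hk1'
          have h2 := concave_chord hconc hk2 hk2'
          rw [hbν] at h1 h2
          have hc1 : ((ν + j : ℕ) : ℝ) = (ν : ℝ) + j := by push_cast; ring
          have hc2 : ((ν + (L - j) : ℕ) : ℝ) = (ν : ℝ) + ((L : ℝ) - j) := by
            rw [Nat.cast_add, Nat.cast_sub hj']
          have hcm : (m : ℝ) = (ν : ℝ) + L := by exact_mod_cast congrArg (Nat.cast : ℕ → ℝ) hLν.symm
          rw [hc1, hcm] at h1
          rw [hc2, hcm] at h2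
          push_cast at h1 h2
          have hLR : (0 : ℝ) < L := by exact_mod_cast hLpos
          exact le_of_mul_le_mul_left
            (by linarith [h1, h2, mul_nonneg (le_of_lt hLR) hbm] :
              (L : ℝ) * M ≤ (L : ℝ) * (b (ν + j) + b (ν + (L - j)))) hLR
        calc ((L : ℝ) + 1) * M = ∑ _j ∈ Finset.range (L + 1), M := by
              rw [Finset.sum_const, Finset.card_range, nsmul_eq_mul]; push_cast; ring
          _ ≤ ∑ j ∈ Finset.range (L + 1), (b (ν + j) + b (ν + (L - j))) :=
              Finset.sum_le_sum hpair
          _ = (∑ j ∈ Finset.range (L + 1), b (ν + j))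
              + ∑ j ∈ Finset.range (L + 1), b (ν + (L - j)) := by
              rw [Finset.sum_add_distrib]
          _ = 2 * ∑ j ∈ Finset.range (L + 1), b (ν + j) := by
              have := Finset.sum_range_reflect (fun j => b (ν + j)) (L + 1)
              simp only [Nat.add_sub_cancel] at this
              rw [this]; ring
    -- combine
    have hsplit : T = (∑ n ∈ Finset.range ν, b n) + ∑ n ∈ Finset.Ico ν (m + 1), b n := by
      rw [hT, ← Finset.sum_range_add_sum_Ico b (by omega : ν ≤ m + 1)]
    have hsucc : (∑ n ∈ Finset.range (ν + 1), b n) = (∑ n ∈ Finset.range ν, b n) + b ν :=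
      Finset.sum_range_succ b ν
    have h2T : (m : ℝ) * M ≤ 2 * T := by
      have hcm : (m : ℝ) = (ν : ℝ) + L := by exact_mod_cast hLν.symm
      rw [hsplit, hcm]
      rw [hbν] at hsucc
      linarith [sum1, sum2, hsucc]
    rw [hS, htsum, hncard]
    push_cast
    linarith [h2T]
  · -- upper bound
    have hTle : T ≤ ((m : ℝ) + 1) * M := by
      rw [hT]
      calc (∑ n ∈ Finset.range (m + 1), b n) ≤ ∑ _n ∈ Finset.range (m + 1), M :=
            Finset.sum_le_sum fun n _ => hble n
        _ = ((m : ℝ) + 1) * M := by rw [Finset.sum_const, Finset.card_range, nsmul_eq_mul]; push_cast; ring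
    rw [hS, htsum, hncard]
    push_cast
    linarith [hTle]
end

section
/- Let s > 0, t > 0, and N ≥ 1 an integer with log(t^N / s) ≥ N. Define C_N = { (r₁,…,r_N) ∈ ℝ^N : 0 ≤ r_j ≤ t for all j, and ∏_{j=1}^N r_j ≤ s }. Then the Lebesgue measure of C_N satisfies vol(C_N) ≤ (s / (N-1)!) · log^N(t^N / s). -/
open MeasureTheory Finset

-- measurability of the set
lemma measSet (N : ℕ) (s t : ℝ) :
    MeasurableSet {x : Fin N → ℝ | (∀ j, 0 ≤ x j ∧ x j ≤ t) ∧ ∏ j, x j ≤ s} := by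
  have : {x : Fin N → ℝ | (∀ j, 0 ≤ x j ∧ x j ≤ t) ∧ ∏ j, x j ≤ s}
      = (⋂ j, {x : Fin N → ℝ | 0 ≤ x j ∧ x j ≤ t}) ∩ {x | ∏ j, x j ≤ s} := by
    ext x; simp [Set.mem_iInter, forall_and]
  rw [this]
  refine MeasurableSet.inter (MeasurableSet.iInter fun j => ?_) ?_
  · exact (measurableSet_le measurable_const (measurable_pi_apply j)).inter
      (measurableSet_le (measurable_pi_apply j) measurable_const)
  · exact measurableSet_le (Finset.measurable_prod _ fun j _ => measurable_pi_apply j)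
      measurable_const


lemma cubeBound' (N : ℕ) (t : ℝ) (ht : 0 ≤ t) (A : Set (Fin N → ℝ))
    (hA : ∀ y ∈ A, ∀ j, 0 ≤ y j ∧ y j ≤ t) :
    volume A ≤ ENNReal.ofReal (t ^ N) := by
  have hsub : A ⊆ Set.pi Set.univ (fun _ : Fin N => Set.Icc 0 t) := fun y hy j _ => hA y hy j
  calc volume A ≤ volume (Set.pi Set.univ (fun _ : Fin N => Set.Icc (0:ℝ) t)) :=
        measure_mono hsub
    _ = ENNReal.ofReal (t ^ N) := by
        rw [volume_pi_pi]; simp [Real.volume_Icc, ← ENNReal.ofReal_pow ht]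



lemma sumBound (N : ℕ) (hN : 1 ≤ N) (L : ℝ) (hL : (N : ℝ) ≤ L) :
    ∑ k ∈ range N, L ^ k / k.factorial ≤ L ^ N / (N - 1).factorial := by
  have hL0 : (0:ℝ) < L := lt_of_lt_of_le (by exact_mod_cast hN) hL
  have step : ∀ m : ℕ, (m : ℝ) + 1 ≤ L → L ^ m / m.factorial ≤ L ^ (m+1) / (m+1).factorial := by
    intro m hm
    rw [div_le_div_iff₀ (by positivity) (by positivity)]
    rw [pow_succ, Nat.factorial_succ]
    push_cast
    have hf : (0:ℝ) < m.factorial := by exact_mod_cast m.factorial_pos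
    have hp : (0:ℝ) < L ^ m := pow_pos hL0 m
    nlinarith [mul_pos hp hf]
  have aux : ∀ d k : ℕ, k + d + 1 ≤ N → L ^ k / k.factorial ≤ L ^ (k+d) / (k+d).factorial := by
    intro d
    induction d with
    | zero => intro k _; simp
    | succ d ih =>
        intro k hk
        have h1 : k + d + 1 ≤ N := by omega
        refine (ih k h1).trans ?_
        have : ((k + d : ℕ) : ℝ) + 1 ≤ L := by
          have : ((k + d + 1 : ℕ) : ℝ) ≤ (N : ℝ) := by exact_mod_cast h1
          push_cast at this ⊢; linarith
        simpa [add_assoc] using step (k + d) this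
  have hterm : ∀ k ∈ range N, L ^ k / k.factorial ≤ L ^ (N-1) / (N-1).factorial := by
    intro k hk
    rw [mem_range] at hk
    have : k + (N - 1 - k) + 1 ≤ N := by omega
    have h2 : k + (N - 1 - k) = N - 1 := by omega
    simpa [h2] using aux (N - 1 - k) k this
  calc ∑ k ∈ range N, L ^ k / k.factorial
      ≤ ∑ _k ∈ range N, L ^ (N-1) / (N-1).factorial := Finset.sum_le_sum hterm
    _ = N * (L ^ (N-1) / (N-1).factorial) := by simp [mul_comm]
    _ ≤ L * (L ^ (N-1) / (N-1).factorial) := by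
        apply mul_le_mul_of_nonneg_right hL; positivity
    _ = L ^ N / (N-1).factorial := by
        rw [← mul_div_assoc, ← pow_succ']
        congr 2
        omega

lemma baseCase (s t : ℝ) (hs : 0 < s) (ht : 0 < t) :
    volume {x : Fin 1 → ℝ | (∀ j, 0 ≤ x j ∧ x j ≤ t) ∧ ∏ j, x j ≤ s}
      ≤ ENNReal.ofReal s := by
  have hmp : MeasurePreserving (MeasurableEquiv.funUnique (Fin 1) ℝ).symm volume volume :=
    (volume_preserving_funUnique (Fin 1) ℝ).symm
  have hset := measSet 1 s t
  rw [← hmp.measure_preimage hset.nullMeasurableSet]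
  have : (MeasurableEquiv.funUnique (Fin 1) ℝ).symm ⁻¹'
      {x : Fin 1 → ℝ | (∀ j, 0 ≤ x j ∧ x j ≤ t) ∧ ∏ j, x j ≤ s}
      ⊆ Set.Icc 0 s := by
    intro a ha
    simp only [Set.mem_preimage, Set.mem_setOf_eq] at ha
    obtain ⟨h1, h2⟩ := ha
    constructor
    · have := (h1 0).1; simpa using this
    · have := h2; simpa using this
  refine (measure_mono this).trans ?_
  rw [Real.volume_Icc]
  simp

lemma sliceVol (N : ℕ) (s t : ℝ) :
    volume {x : Fin (N+1) → ℝ | (∀ j, 0 ≤ x j ∧ x j ≤ t) ∧ ∏ j, x j ≤ s}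
      = ∫⁻ a : ℝ, volume {y : Fin N → ℝ |
          ((0 ≤ a ∧ a ≤ t) ∧ ∀ j, 0 ≤ y j ∧ y j ≤ t) ∧ a * ∏ j, y j ≤ s} := by
  set S := {x : Fin (N+1) → ℝ | (∀ j, 0 ≤ x j ∧ x j ≤ t) ∧ ∏ j, x j ≤ s} with hS
  have hmeas := measSet (N+1) s t
  have hmp := (MeasureTheory.volume_preserving_piFinSuccAbove (fun _ : Fin (N+1) => ℝ) 0).symm
  rw [← hmp.measure_preimage hmeas.nullMeasurableSet]
  have hpre : (MeasurableEquiv.piFinSuccAbove (fun _ : Fin (N+1) => ℝ) 0).symm ⁻¹' S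
      = {p : ℝ × (Fin N → ℝ) |
          ((0 ≤ p.1 ∧ p.1 ≤ t) ∧ ∀ j, 0 ≤ p.2 j ∧ p.2 j ≤ t) ∧ p.1 * ∏ j, p.2 j ≤ s} := by
    ext ⟨a, y⟩
    simp only [Set.mem_preimage, MeasurableEquiv.piFinSuccAbove_symm_apply, hS,
      Set.mem_setOf_eq]
    constructor
    · rintro ⟨h1, h2⟩
      refine ⟨⟨?_, fun j => ?_⟩, ?_⟩
      · simpa using h1 0
      · simpa using h1 ((0:Fin (N+1)).succAbove j)
      · rw [Fin.prod_univ_succAbove _ 0] at h2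
        simpa using h2
    · rintro ⟨⟨ha, hy⟩, h2⟩
      refine ⟨?_, ?_⟩
      · intro j
        induction j using Fin.cases with
        | zero => simpa using ha
        | succ i => simpa using hy i
      · rw [Fin.prod_univ_succAbove _ 0]
        simpa using h2
  rw [hpre]
  have hT : MeasurableSet ((MeasurableEquiv.piFinSuccAbove (fun _ : Fin (N+1) => ℝ) 0).symm ⁻¹' S) :=
    (MeasurableEquiv.piFinSuccAbove (fun _ : Fin (N+1) => ℝ) 0).symm.measurable hmeas
  rw [hpre] at hT
  rw [MeasureTheory.Measure.volume_eq_prod, Measure.prod_apply hT]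
  rfl

-- FTC: antiderivative computation. ∫ a in x₀..t, (s/a) * ∑_{k<N} log(c a)^k/k!  where c = t^N/s, x₀ = s/t^N
lemma ftcStep (N : ℕ) (s t c x₀ : ℝ) (hs : 0 < s) (hc : 0 < c) (hx₀ : 0 < x₀) (hx₀t : x₀ ≤ t) :
    ∫ a in x₀..t, (s / a) * ∑ k ∈ range N, Real.log (c * a) ^ k / k.factorial
      = (s * ∑ k ∈ range N, Real.log (c * t) ^ (k+1) / (k+1).factorial)
        - (s * ∑ k ∈ range N, Real.log (c * x₀) ^ (k+1) / (k+1).factorial) := by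
  set H : ℝ → ℝ := fun a => s * ∑ k ∈ range N, Real.log (c * a) ^ (k+1) / (k+1).factorial with hH
  have hderiv : ∀ a ∈ Set.uIcc x₀ t, HasDerivAt H ((s / a) * ∑ k ∈ range N, Real.log (c * a) ^ k / k.factorial) a := by
    intro a ha
    have ha0 : 0 < a := lt_of_lt_of_le hx₀ (by
      rw [Set.uIcc_of_le hx₀t] at ha; exact ha.1)
    have hlog : HasDerivAt (fun a : ℝ => Real.log (c * a)) (1 / a) a := by
      have h1 : HasDerivAt (fun a : ℝ => c * a) c a := by
        simpa using (hasDerivAt_id a).const_mul c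
      have h2 : HasDerivAt Real.log (1 / (c * a)) (c * a) := by
        simpa [one_div] using Real.hasDerivAt_log (by positivity : c * a ≠ 0)
      have := h2.comp a h1
      convert this using 1 <;> try rfl
      field_simp
    have hterm : ∀ k : ℕ, HasDerivAt (fun a : ℝ => Real.log (c * a) ^ (k+1) / (k+1).factorial)
        (Real.log (c * a) ^ k / k.factorial * (1/a)) a := by
      intro k
      have := (hlog.pow (k+1)).div_const ((k+1).factorial : ℝ)
      convert this using 1 <;> try rfl
      rw [Nat.factorial_succ]
      push_cast
      have : ((k:ℝ)+1) ≠ 0 := by positivity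
      field_simp
    have hsum : HasDerivAt (fun a : ℝ => ∑ k ∈ range N, Real.log (c * a) ^ (k+1) / (k+1).factorial)
        (∑ k ∈ range N, Real.log (c * a) ^ k / k.factorial * (1/a)) a :=
      HasDerivAt.fun_sum fun k _ => hterm k
    have := hsum.const_mul s
    convert this using 1 <;> try rfl
    rw [Finset.mul_sum, Finset.mul_sum]
    congr 1; ext k
    ring
  have hcont : IntervalIntegrable (fun a => (s / a) * ∑ k ∈ range N, Real.log (c * a) ^ k / k.factorial) volume x₀ t := by
    apply ContinuousOn.intervalIntegrable
    apply ContinuousOn.mul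
    · exact continuousOn_const.div continuousOn_id (fun a ha => by
        rw [Set.uIcc_of_le hx₀t] at ha
        exact ne_of_gt (lt_of_lt_of_le hx₀ ha.1))
    · apply continuousOn_finset_sum
      intro k _
      apply ContinuousOn.div_const
      apply ContinuousOn.pow
      apply Real.continuousOn_log.comp (continuousOn_const.mul continuousOn_id)
      intro a ha
      rw [Set.uIcc_of_le hx₀t] at ha
      simp only [Set.mem_compl_iff, Set.mem_singleton_iff, Pi.mul_apply, id_eq]
      have : 0 < a := lt_of_lt_of_le hx₀ ha.1
      positivity
  rw [intervalIntegral.integral_eq_sub_of_hasDerivAt hderiv hcont]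

lemma keyvol : ∀ N : ℕ, 1 ≤ N → ∀ s t : ℝ, 0 < s → 0 < t → s ≤ t ^ N →
    volume {x : Fin N → ℝ | (∀ j, 0 ≤ x j ∧ x j ≤ t) ∧ ∏ j, x j ≤ s}
      ≤ ENNReal.ofReal (s * ∑ k ∈ range N, Real.log (t ^ N / s) ^ k / k.factorial) := by
  intro N hN
  induction N, hN using Nat.le_induction with
  | base =>
      intro s t hs ht _
      simp only [range_one, sum_singleton, pow_zero, Nat.factorial_zero, Nat.cast_one,
        div_one, mul_one]
      exact baseCase s t hs ht
  | succ N hN ih =>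
      intro s t hs ht hstN
      have htN : (0:ℝ) < t ^ N := pow_pos ht N
      set x₀ : ℝ := s / t ^ N with hx₀def
      have hx₀ : 0 < x₀ := div_pos hs htN
      have hx₀t : x₀ ≤ t := by
        rw [hx₀def, div_le_iff₀ htN]
        calc s ≤ t ^ (N+1) := hstN
          _ = t * t ^ N := by ring
      set c : ℝ := t ^ N / s with hcdef
      have hc : 0 < c := div_pos htN hs
      set L : ℝ := Real.log (t ^ (N+1) / s) with hLdef
      have hL0 : 0 ≤ L := Real.log_nonneg (by
        rw [le_div_iff₀ hs]; simpa using hstN)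
      -- the dominating function
      set G : ℝ → ENNReal := fun a =>
        if a * t ^ N ≤ s then ENNReal.ofReal (t ^ N)
        else ENNReal.ofReal ((s / a) * ∑ k ∈ range N, Real.log (c * a) ^ k / k.factorial)
        with hGdef
      -- pointwise bound
      have hpt : ∀ a : ℝ, volume {y : Fin N → ℝ |
          ((0 ≤ a ∧ a ≤ t) ∧ ∀ j, 0 ≤ y j ∧ y j ≤ t) ∧ a * ∏ j, y j ≤ s}
          ≤ (Set.Icc 0 t).indicator G a := by
        intro a
        by_cases hmem : a ∈ Set.Icc (0:ℝ) t
        · rw [Set.indicator_of_mem hmem]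
          obtain ⟨ha0, hat⟩ := hmem
          by_cases hsmall : a * t ^ N ≤ s
          · rw [hGdef]; simp only [if_pos hsmall]
            exact cubeBound' N t ht.le _ (fun y hy j => hy.1.2 j)
          · rw [hGdef]; simp only [if_neg hsmall]
            have ha0' : 0 < a := by
              rcases ha0.lt_or_eq with h | h
              · exact h
              · exfalso; apply hsmall; rw [← h]; simpa using hs.le
            have hseteq : {y : Fin N → ℝ |
                ((0 ≤ a ∧ a ≤ t) ∧ ∀ j, 0 ≤ y j ∧ y j ≤ t) ∧ a * ∏ j, y j ≤ s}
                = {y : Fin N → ℝ | (∀ j, 0 ≤ y j ∧ y j ≤ t) ∧ ∏ j, y j ≤ s / a} := by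
              ext y
              simp only [Set.mem_setOf_eq]
              rw [le_div_iff₀ ha0', mul_comm]
              tauto
            rw [hseteq]
            have hsa : 0 < s / a := div_pos hs ha0'
            have hsa' : s / a ≤ t ^ N := by
              rw [div_le_iff₀ ha0']
              push_neg at hsmall
              nlinarith
            have harg : t ^ N / (s / a) = c * a := by
              rw [hcdef]; field_simp
            have := ih (s / a) t hsa ht hsa'
            rw [harg] at this
            exact this
        · rw [Set.indicator_of_notMem hmem]
          rw [Set.mem_Icc] at hmem
          have hempty : {y : Fin N → ℝ |
              ((0 ≤ a ∧ a ≤ t) ∧ ∀ j, 0 ≤ y j ∧ y j ≤ t) ∧ a * ∏ j, y j ≤ s} = ∅ := by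
            ext y
            simp only [Set.mem_setOf_eq, Set.mem_empty_iff_false, iff_false]
            rintro ⟨⟨ha, _⟩, _⟩
            exact hmem ha
          simp [hempty]
      -- assemble
      set g : ℝ → ℝ := fun a => (s / a) * ∑ k ∈ range N, Real.log (c * a) ^ k / k.factorial
        with hgdef
      have hcx₀ : c * x₀ = 1 := by rw [hcdef, hx₀def]; field_simp
      have hct : c * t = t ^ (N+1) / s := by rw [hcdef]; field_simp; ring
      have hgcont : ContinuousOn g (Set.Icc x₀ t) := by
        apply ContinuousOn.mul
        · exact continuousOn_const.div continuousOn_id (fun a ha =>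
            ne_of_gt (lt_of_lt_of_le hx₀ ha.1))
        · apply continuousOn_finset_sum
          intro k _
          apply ContinuousOn.div_const
          apply ContinuousOn.pow
          apply Real.continuousOn_log.comp (continuousOn_const.mul continuousOn_id)
          intro a ha
          simp only [Set.mem_compl_iff, Set.mem_singleton_iff, Pi.mul_apply, id_eq]
          have : 0 < a := lt_of_lt_of_le hx₀ ha.1
          positivity
      have hgnn : ∀ a ∈ Set.Ioc x₀ t, 0 ≤ g a := by
        intro a ha
        have ha0 : 0 < a := lt_trans hx₀ ha.1
        have hca : 1 ≤ c * a := by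
          rw [← hcx₀]
          exact mul_le_mul_of_nonneg_left ha.1.le hc.le
        have hlognn : 0 ≤ Real.log (c * a) := Real.log_nonneg hca
        apply mul_nonneg (div_nonneg hs.le ha0.le)
        exact Finset.sum_nonneg fun k _ => div_nonneg (pow_nonneg hlognn k) (Nat.cast_nonneg _)
      have hInt : IntegrableOn g (Set.Ioc x₀ t) volume :=
        (hgcont.integrableOn_Icc).mono_set Set.Ioc_subset_Icc_self
      calc volume {x : Fin (N+1) → ℝ | (∀ j, 0 ≤ x j ∧ x j ≤ t) ∧ ∏ j, x j ≤ s}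
          = ∫⁻ a : ℝ, volume {y : Fin N → ℝ |
              ((0 ≤ a ∧ a ≤ t) ∧ ∀ j, 0 ≤ y j ∧ y j ≤ t) ∧ a * ∏ j, y j ≤ s} :=
            sliceVol N s t
        _ ≤ ∫⁻ a : ℝ, (Set.Icc 0 t).indicator G a := lintegral_mono hpt
        _ = ∫⁻ a in Set.Icc 0 t, G a := lintegral_indicator measurableSet_Icc G
        _ = ∫⁻ a in Set.Icc 0 x₀ ∪ Set.Ioc x₀ t, G a := by
            rw [Set.Icc_union_Ioc_eq_Icc hx₀.le hx₀t]
        _ = (∫⁻ a in Set.Icc 0 x₀, G a) + ∫⁻ a in Set.Ioc x₀ t, G a := by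
            apply lintegral_union measurableSet_Ioc
            rw [Set.disjoint_left]
            intro a ha1 ha2
            exact absurd ha2.1 (not_lt.2 ha1.2)
        _ = (∫⁻ _a in Set.Icc 0 x₀, ENNReal.ofReal (t ^ N)) + ∫⁻ a in Set.Ioc x₀ t,
              ENNReal.ofReal (g a) := by
            congr 1
            · apply setLIntegral_congr_fun measurableSet_Icc
              intro a ha
              rw [hGdef]
              have : a * t ^ N ≤ s := by
                have := mul_le_mul_of_nonneg_right ha.2 htN.le
                rw [hx₀def] at this
                calc a * t ^ N ≤ s / t ^ N * t ^ N := this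
                  _ = s := by field_simp
              simp only [if_pos this]
            · apply setLIntegral_congr_fun measurableSet_Ioc
              intro a ha
              rw [hGdef]
              have : ¬ a * t ^ N ≤ s := by
                push_neg
                have := mul_lt_mul_of_pos_right ha.1 htN
                rw [hx₀def] at this
                calc s = s / t ^ N * t ^ N := by field_simp
                  _ < a * t ^ N := this
              simp only [if_neg this]; rfl
        _ = ENNReal.ofReal s + ENNReal.ofReal (s * ∑ k ∈ range N, L ^ (k+1) / (k+1).factorial) := by
            congr 1
            · rw [setLIntegral_const, Real.volume_Icc]
              rw [← ENNReal.ofReal_mul (by positivity)]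
              congr 1
              rw [hx₀def]
              field_simp; simp
            · rw [← ofReal_integral_eq_lintegral_ofReal hInt
                ((ae_restrict_iff' measurableSet_Ioc).2 (ae_of_all _ hgnn))]
              congr 1
              rw [← intervalIntegral.integral_of_le hx₀t]
              rw [hgdef]
              rw [ftcStep N s t c x₀ hs hc hx₀ hx₀t]
              rw [hcx₀, hct, ← hLdef]
              simp [Real.log_one]
        _ = ENNReal.ofReal (s * ∑ k ∈ range (N+1), L ^ k / k.factorial) := by
            rw [← ENNReal.ofReal_add hs.le (by
              apply mul_nonneg hs.le
              exact Finset.sum_nonneg fun k _ => div_nonneg (pow_nonneg hL0 _) (Nat.cast_nonneg _))]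
            congr 1
            rw [Finset.sum_range_succ']
            simp
            ring

/-- Volume estimate: for `s, t > 0`, `N ≥ 1` with `log (t^N / s) ≥ N`, the region
`C_N = {r ∈ ℝ^N : 0 ≤ r_j ≤ t, ∏ r_j ≤ s}` has Lebesgue measure at most
`(s / (N-1)!) · log^N (t^N / s)`. -/
theorem stmt11 (N : ℕ) (hN : 1 ≤ N) (s t : ℝ) (hs : 0 < s) (ht : 0 < t)
    (hlog : (N : ℝ) ≤ Real.log (t ^ N / s)) :
    volume {x : Fin N → ℝ | (∀ j, 0 ≤ x j ∧ x j ≤ t) ∧ ∏ j, x j ≤ s} ≤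
      ENNReal.ofReal (s / (N - 1).factorial * Real.log (t ^ N / s) ^ N) := by
  set L : ℝ := Real.log (t ^ N / s) with hLdef
  have hL1 : (1:ℝ) ≤ L := le_trans (by exact_mod_cast hN) hlog
  have hstN : s ≤ t ^ N := by
    by_contra h
    push_neg at h
    have h1 : t ^ N / s ≤ 1 := by
      rw [div_le_one hs]; exact h.le
    have := Real.log_nonpos (by positivity) h1
    rw [← hLdef] at this
    linarith
  have h1 := keyvol N hN s t hs ht hstN
  refine h1.trans (ENNReal.ofReal_le_ofReal ?_)
  rw [← hLdef]
  have h2 := sumBound N hN L hlog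
  calc s * ∑ k ∈ Finset.range N, L ^ k / k.factorial
      ≤ s * (L ^ N / (N - 1).factorial) := mul_le_mul_of_nonneg_left h2 hs.le
    _ = s / (N - 1).factorial * L ^ N := by ring
end

section
/- Let u be harmonic on a neighborhood of the closed disk |z| ≤ r, and suppose u(a) ≥ 0 for some a with |a| = κr, 0 < κ < 1. Then ∫_{|z|=r} u⁻(z) dm(z) ≤ (2/δ)²·∫_{|z|=r} u⁺(z) dm(z), where δ = 1 - κ, u⁺ = max(u,0), u⁻ = max(-u,0), and m is normalized arclength measure on |z| = r. Consequently ∫ |u| dm ≤ (1 + 4/δ²)·∫ u⁺ dm. -/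
open Real MeasureTheory Metric Set intervalIntegral

private lemma poisson_rep (r κ : ℝ) (hr : 0 < r) (hκ0 : 0 < κ) (hκ1 : κ < 1)
    (r' : ℝ) (hr' : r < r') (F : ℂ → ℂ) (hF : DifferentiableOn ℂ F (Metric.ball 0 r'))
    (a : ℂ) (ha : ‖a‖ = κ * r) :
    (∫ θ in (0:ℝ)..(2*π),
        ((r^2 - (κ*r)^2) / (‖circleMap 0 r θ - a‖)^2) * (F (circleMap 0 r θ)).re)
      = 2 * π * (F a).re := by
  have hκr : κ * r < r := by nlinarith
  have haball : a ∈ Metric.ball (0:ℂ) r := by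
    rw [mem_ball_zero_iff]; show ‖a‖ < r; rw [ha]; exact hκr
  have haball' : a ∈ Metric.ball (0:ℂ) r' := Metric.ball_subset_ball hr'.le haball
  have hsub : Metric.closedBall (0:ℂ) r ⊆ Metric.ball 0 r' := Metric.closedBall_subset_ball hr'
  have hFc : ContinuousOn F (Metric.closedBall (0:ℂ) r) := hF.continuousOn.mono hsub
  have hFd : ∀ x ∈ Metric.ball (0:ℂ) r, DifferentiableAt ℂ F x := fun x hx =>
    hF.differentiableAt (Metric.isOpen_ball.mem_nhds (Metric.ball_subset_ball hr'.le hx))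
  set c : ℂ := (starRingEnd ℂ) a with hc
  have hden : ∀ z : ℂ, ‖z‖ ≤ r → (r:ℂ)^2 - c*z ≠ 0 := by
    intro z hz h
    rw [sub_eq_zero] at h
    have h2 := congrArg norm h
    simp only [norm_mul, norm_pow, Complex.norm_real, Real.norm_eq_abs, Complex.norm_conj, hc] at h2
    rw [ha] at h2
    rw [abs_of_pos hr] at h2
    have h3 : κ * r * ‖z‖ ≤ κ * r * r :=
      mul_le_mul_of_nonneg_left hz (mul_pos hκ0 hr).le
    nlinarith
  -- Cauchy integral formula
  have h1 : (∮ z in C(0, r), (z - a)⁻¹ • F z) = (2 * ↑π * Complex.I : ℂ) • F a :=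
    Complex.circleIntegral_sub_inv_smul_of_differentiable_on_off_countable
      Set.countable_empty haball hFc (fun x hx => hFd x hx.1)
  -- Cauchy-Goursat for the reflected term
  have h2 : (∮ z in C(0, r), (c * ((r:ℂ)^2 - c*z)⁻¹) • F z) = 0 := by
    refine Complex.circleIntegral_eq_zero_of_differentiable_on_off_countable hr.le
      Set.countable_empty ?_ ?_
    · have hcm : ContinuousOn (fun z : ℂ => c * ((r:ℂ)^2 - c*z)⁻¹) (Metric.closedBall 0 r) := by
        refine continuousOn_const.mul ?_
        refine ContinuousOn.inv₀ ?_ ?_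
        · exact continuousOn_const.sub (continuousOn_const.mul continuousOn_id)
        · intro z hz
          exact hden z (by simpa [mem_closedBall_zero_iff] using hz)
      exact hcm.smul hFc
    · intro z hz
      have hdm : DifferentiableAt ℂ (fun z : ℂ => c * ((r:ℂ)^2 - c*z)⁻¹) z := by
        refine (differentiableAt_const _).mul ?_
        refine DifferentiableAt.inv ?_ (hden z (le_of_lt (by simpa [mem_ball_zero_iff] using hz.1)))
        exact (differentiableAt_const _).sub ((differentiableAt_const _).mul differentiableAt_id)
      exact hdm.smul (hFd z hz.1)
  simp only [circleIntegral, deriv_circleMap, smul_eq_mul] at h1 h2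
  -- integrability of the two integrands
  have hne : ∀ θ : ℝ, circleMap 0 r θ - a ≠ 0 := by
    intro θ h
    rw [sub_eq_zero] at h
    have := congrArg norm h
    rw [norm_circleMap_zero, abs_of_pos hr, ha] at this
    nlinarith
  have hzmem : ∀ θ : ℝ, circleMap 0 r θ ∈ Metric.ball (0:ℂ) r' := by
    intro θ
    rw [mem_ball_zero_iff]
    show ‖(_ : ℂ)‖ < r'
    rw [norm_circleMap_zero, abs_of_pos hr]; exact hr'
  have hFcirc : Continuous fun θ : ℝ => F (circleMap 0 r θ) :=
    hF.continuousOn.comp_continuous (continuous_circleMap 0 r) hzmem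
  have hg1 : Continuous fun θ : ℝ =>
      circleMap 0 r θ * Complex.I * ((circleMap 0 r θ - a)⁻¹ * F (circleMap 0 r θ)) := by
    refine ((continuous_circleMap 0 r).mul continuous_const).mul (Continuous.mul ?_ hFcirc)
    exact Continuous.inv₀ ((continuous_circleMap 0 r).sub continuous_const) hne
  have hg2 : Continuous fun θ : ℝ =>
      circleMap 0 r θ * Complex.I * (c * ((r:ℂ)^2 - c * circleMap 0 r θ)⁻¹ * F (circleMap 0 r θ)) := by
    refine ((continuous_circleMap 0 r).mul continuous_const).mul
      ((continuous_const.mul (Continuous.inv₀ ?_ ?_)).mul hFcirc)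
    · exact continuous_const.sub (continuous_const.mul (continuous_circleMap 0 r))
    · intro θ
      refine hden _ ?_
      rw [norm_circleMap_zero, abs_of_pos hr]
  -- add the two formulas
  have hadd : (∫ θ in (0:ℝ)..(2*π),
        (circleMap 0 r θ * Complex.I * ((circleMap 0 r θ - a)⁻¹ * F (circleMap 0 r θ)) +
         circleMap 0 r θ * Complex.I * (c * ((r:ℂ)^2 - c * circleMap 0 r θ)⁻¹ * F (circleMap 0 r θ))))
      = (2 * ↑π * Complex.I : ℂ) * F a := by
    rw [intervalIntegral.integral_add (hg1.intervalIntegrable _ _) (hg2.intervalIntegrable _ _),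
      h1, h2, add_zero]
  -- kernel identity
  have hker : ∀ θ : ℝ,
      circleMap 0 r θ * Complex.I * ((circleMap 0 r θ - a)⁻¹ * F (circleMap 0 r θ)) +
      circleMap 0 r θ * Complex.I * (c * ((r:ℂ)^2 - c * circleMap 0 r θ)⁻¹ * F (circleMap 0 r θ))
      = Complex.I * (((r^2 - (κ*r)^2) / (‖circleMap 0 r θ - a‖)^2 : ℝ) : ℂ)
          * F (circleMap 0 r θ) := by
    intro θ
    set z : ℂ := circleMap 0 r θ with hz
    have hzw : z * (starRingEnd ℂ) z = (r:ℂ)^2 := by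
      rw [Complex.mul_conj]
      rw [← Complex.sq_norm]
      norm_cast
      rw [hz, norm_circleMap_zero, abs_of_pos hr]
    have hza : z - a ≠ 0 := hne θ
    have hconj : (starRingEnd ℂ) z - c = (starRingEnd ℂ) (z - a) := by
      rw [hc, map_sub]
    have hwc : (starRingEnd ℂ) z - c ≠ 0 := by
      rw [hconj]
      exact fun h => hza (by have := congrArg (starRingEnd ℂ) h; simpa using this)
    have hz0 : z ≠ 0 := by
      intro h
      have := congrArg norm h
      rw [hz, norm_circleMap_zero, abs_of_pos hr] at this
      simp at this
      exact hr.ne' this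
    have hca : c * a = (((κ*r)^2 : ℝ) : ℂ) := by
      rw [hc, mul_comm, Complex.mul_conj, ← Complex.sq_norm, ha]
    have hKden : (((‖z - a‖)^2 : ℝ) : ℂ) = (z - a) * ((starRingEnd ℂ) z - c) := by
      rw [hconj, Complex.mul_conj, ← Complex.sq_norm]
    have key : z * ((z - a)⁻¹ + c * ((r:ℂ)^2 - c*z)⁻¹)
        = ((r:ℂ)^2 - c*a) / ((z - a) * ((starRingEnd ℂ) z - c)) := by
      rw [← hzw]
      have hd : z * (starRingEnd ℂ) z - c * z = z * ((starRingEnd ℂ) z - c) := by ring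
      rw [hd]
      field_simp
      ring
    have keyr : z * ((z - a)⁻¹ + c * ((r:ℂ)^2 - c*z)⁻¹)
        = (((r^2 - (κ*r)^2) / (‖z - a‖)^2 : ℝ) : ℂ) := by
      rw [key, ← hKden, hca]
      push_cast
      try ring
    calc circleMap 0 r θ * Complex.I * ((circleMap 0 r θ - a)⁻¹ * F (circleMap 0 r θ)) +
      circleMap 0 r θ * Complex.I * (c * ((r:ℂ)^2 - c * circleMap 0 r θ)⁻¹ * F (circleMap 0 r θ))
        = Complex.I * (z * ((z - a)⁻¹ + c * ((r:ℂ)^2 - c*z)⁻¹)) * F (circleMap 0 r θ) := by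
          rw [← hz]; ring
      _ = _ := by rw [keyr]
  -- rewrite the integral using the kernel identity
  have h3 : (∫ θ in (0:ℝ)..(2*π),
      Complex.I * (((r^2 - (κ*r)^2) / (‖circleMap 0 r θ - a‖)^2 : ℝ) : ℂ)
        * F (circleMap 0 r θ)) = (2 * ↑π * Complex.I : ℂ) * F a := by
    rw [← hadd]
    apply intervalIntegral.integral_congr
    intro θ _
    exact (hker θ).symm
  have hKcont : Continuous fun θ : ℝ =>
      (r^2 - (κ*r)^2) / (‖circleMap 0 r θ - a‖)^2 := by
    refine continuous_const.div ?_ ?_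
    · exact (continuous_norm.comp ((continuous_circleMap 0 r).sub continuous_const)).pow 2
    · intro θ
      exact pow_ne_zero 2 ((norm_ne_zero_iff.mpr (hne θ)))
  have hFcirc' : Continuous fun θ : ℝ =>
      ((((r^2 - (κ*r)^2) / (‖circleMap 0 r θ - a‖)^2 : ℝ)) : ℂ)
        * F (circleMap 0 r θ) :=
    (Complex.continuous_ofReal.comp hKcont).mul hFcirc
  have h4 : (∫ θ in (0:ℝ)..(2*π),
      (((r^2 - (κ*r)^2) / (‖circleMap 0 r θ - a‖)^2 : ℝ) : ℂ)
        * F (circleMap 0 r θ)) = 2 * (π:ℂ) * F a := by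
    have h3' := h3
    simp only [mul_assoc] at h3'
    rw [intervalIntegral.integral_const_mul] at h3'
    exact mul_left_cancel₀ Complex.I_ne_zero (h3'.trans
      (show (2:ℂ) * (↑π * (Complex.I * F a)) = Complex.I * (2 * ↑π * F a) by ring))
  have h5 := Complex.reCLM.intervalIntegral_comp_comm (hFcirc'.intervalIntegrable (μ := MeasureTheory.volume) 0 (2*π))
  rw [h4] at h5
  have h6 : (∫ θ in (0:ℝ)..(2*π), Complex.reCLM
      ((((r^2 - (κ*r)^2) / (‖circleMap 0 r θ - a‖)^2 : ℝ) : ℂ)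
        * F (circleMap 0 r θ)))
      = ∫ θ in (0:ℝ)..(2*π),
        ((r^2 - (κ*r)^2) / (‖circleMap 0 r θ - a‖)^2) * (F (circleMap 0 r θ)).re := by
    apply intervalIntegral.integral_congr
    intro θ _
    simp only [Complex.reCLM_apply, Complex.re_ofReal_mul]
  rw [h6] at h5
  rw [h5]
  have : (2 * (π:ℂ) * F a) = (((2*π : ℝ)):ℂ) * F a := by push_cast; ring
  rw [this]
  simp only [Complex.reCLM_apply, Complex.re_ofReal_mul]

/-- Let `u` be harmonic on a neighborhood of the closed disk `|z| ≤ r` (realized as the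
real part of a holomorphic function on a larger ball) with `u a ≥ 0` at some point `a`
with `|a| = κr`, `0 < κ < 1`. Then with `δ = 1 - κ`,
`∫ u⁻ dm ≤ (2/δ)² ∫ u⁺ dm` and `∫ |u| dm ≤ (1 + 4/δ²) ∫ u⁺ dm`,
where `m` is the normalized angular measure on `|z| = r`. -/
theorem stmt13 (r κ δ : ℝ) (hr : 0 < r) (hκ0 : 0 < κ) (hκ1 : κ < 1) (hδ : δ = 1 - κ)
    (u : ℂ → ℝ)
    (hharm : ∃ r' > r, ∃ F : ℂ → ℂ, DifferentiableOn ℂ F (Metric.ball 0 r') ∧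
      ∀ z ∈ Metric.ball (0 : ℂ) r', u z = (F z).re)
    (a : ℂ) (ha : ‖a‖ = κ * r) (hua : 0 ≤ u a) :
    (1 / (2 * π)) * ∫ θ in (0 : ℝ)..(2 * π), max (-(u (circleMap 0 r θ))) 0 ≤
      (2 / δ) ^ 2 * ((1 / (2 * π)) * ∫ θ in (0 : ℝ)..(2 * π), max (u (circleMap 0 r θ)) 0) ∧
    (1 / (2 * π)) * ∫ θ in (0 : ℝ)..(2 * π), |u (circleMap 0 r θ)| ≤
      (1 + 4 / δ ^ 2) * ((1 / (2 * π)) * ∫ θ in (0 : ℝ)..(2 * π), max (u (circleMap 0 r θ)) 0) := by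
  obtain ⟨r', hr', F, hF, hFu⟩ := hharm
  have hπ : (0:ℝ) < π := Real.pi_pos
  have hδ0 : 0 < δ := by rw [hδ]; linarith
  have hκr : κ * r < r := by nlinarith
  have hzmem : ∀ θ : ℝ, circleMap 0 r θ ∈ Metric.ball (0:ℂ) r' := by
    intro θ
    rw [mem_ball_zero_iff]
    show ‖(_ : ℂ)‖ < r'
    rw [norm_circleMap_zero, abs_of_pos hr]; exact hr'
  have haball' : a ∈ Metric.ball (0:ℂ) r' := by
    rw [mem_ball_zero_iff]; show ‖a‖ < r'; rw [ha]; linarith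
  set v : ℝ → ℝ := fun θ => u (circleMap 0 r θ) with hv
  set K : ℝ → ℝ := fun θ => (r^2 - (κ*r)^2) / (‖circleMap 0 r θ - a‖)^2 with hK
  have hne : ∀ θ : ℝ, circleMap 0 r θ - a ≠ 0 := by
    intro θ h
    rw [sub_eq_zero] at h
    have := congrArg norm h
    rw [norm_circleMap_zero, abs_of_pos hr, ha] at this
    nlinarith
  -- Poisson representation
  have hrep0 : (∫ θ in (0:ℝ)..(2*π), K θ * v θ) = 2 * π * u a := by
    have h := poisson_rep r κ hr hκ0 hκ1 r' hr' F hF a ha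
    rw [hFu a haball']
    rw [← h]
    apply intervalIntegral.integral_congr
    intro θ _
    rw [hv, hK]
    simp only
    rw [hFu _ (hzmem θ)]
  have hrep : 0 ≤ ∫ θ in (0:ℝ)..(2*π), K θ * v θ := by
    rw [hrep0]; positivity
  -- continuity
  have hFcirc : Continuous fun θ : ℝ => F (circleMap 0 r θ) :=
    hF.continuousOn.comp_continuous (continuous_circleMap 0 r) hzmem
  have hvcont : Continuous v := by
    have : v = fun θ => (F (circleMap 0 r θ)).re := funext fun θ => hFu _ (hzmem θ)
    rw [this]
    exact Complex.continuous_re.comp hFcirc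
  have hKcont : Continuous K := by
    refine continuous_const.div ?_ ?_
    · exact (continuous_norm.comp ((continuous_circleMap 0 r).sub continuous_const)).pow 2
    · intro θ
      exact pow_ne_zero 2 ((norm_ne_zero_iff.mpr (hne θ)))
  -- kernel bounds
  have hdlb : ∀ θ : ℝ, δ * r ≤ ‖circleMap 0 r θ - a‖ := by
    intro θ
    have h := norm_sub_norm_le (circleMap 0 r θ) a
    rw [norm_circleMap_zero,
      abs_of_pos hr, ha] at h
    rw [hδ]; linarith
  have hdub : ∀ θ : ℝ, ‖circleMap 0 r θ - a‖ ≤ (1 + κ) * r := by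
    intro θ
    have h := norm_sub_le (circleMap 0 r θ) a
    rw [norm_circleMap_zero,
      abs_of_pos hr, ha] at h
    linarith
  have hKlb : ∀ θ : ℝ, δ/2 ≤ K θ := by
    intro θ
    have h1 := hdlb θ
    have h2 := hdub θ
    have hd0 : 0 < ‖circleMap 0 r θ - a‖ := lt_of_lt_of_le (by positivity) h1
    rw [hK]
    simp only
    rw [le_div_iff₀ (pow_pos hd0 2)]
    have h3 : (‖circleMap 0 r θ - a‖)^2 ≤ ((1+κ)*r)^2 := by nlinarith
    rw [hδ]
    nlinarith [mul_le_mul_of_nonneg_left h3 (show (0:ℝ) ≤ (1-κ)/2 by linarith),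
      mul_nonneg (sq_nonneg ((1-κ)*r)) (show (0:ℝ) ≤ 1+κ by linarith)]
  have hKub : ∀ θ : ℝ, K θ ≤ 2/δ := by
    intro θ
    have h1 := hdlb θ
    have hd0 : 0 < ‖circleMap 0 r θ - a‖ := lt_of_lt_of_le (by positivity) h1
    rw [hK]
    simp only
    rw [div_le_div_iff₀ (pow_pos hd0 2) hδ0]
    have h3 : (δ*r)^2 ≤ (‖circleMap 0 r θ - a‖)^2 :=
      pow_le_pow_left₀ (by positivity) h1 2
    rw [hδ] at h3 ⊢
    nlinarith [h3, mul_nonneg (sq_nonneg ((1-κ)*r)) (show (0:ℝ) ≤ 1-κ by linarith)]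
  -- integrability
  have hip : IntervalIntegrable (fun θ => max (v θ) 0) MeasureTheory.volume 0 (2*π) :=
    (hvcont.max continuous_const).intervalIntegrable 0 (2*π)
  have him : IntervalIntegrable (fun θ => max (-(v θ)) 0) MeasureTheory.volume 0 (2*π) :=
    ((hvcont.neg).max continuous_const).intervalIntegrable 0 (2*π)
  have hkp : IntervalIntegrable (fun θ => K θ * max (v θ) 0) MeasureTheory.volume 0 (2*π) :=
    (hKcont.mul (hvcont.max continuous_const)).intervalIntegrable 0 (2*π)
  have hkm : IntervalIntegrable (fun θ => K θ * max (-(v θ)) 0) MeasureTheory.volume 0 (2*π) :=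
    (hKcont.mul ((hvcont.neg).max continuous_const)).intervalIntegrable 0 (2*π)
  -- split
  have hsplit : (∫ θ in (0:ℝ)..(2*π), K θ * v θ)
      = (∫ θ in (0:ℝ)..(2*π), K θ * max (v θ) 0) - ∫ θ in (0:ℝ)..(2*π), K θ * max (-(v θ)) 0 := by
    rw [← intervalIntegral.integral_sub hkp hkm]
    apply intervalIntegral.integral_congr
    intro θ _
    have : max (v θ) 0 - max (-(v θ)) 0 = v θ := by
      rcases le_total (v θ) 0 with h | h
      · rw [max_eq_right h, max_eq_left (by linarith)]; ring
      · rw [max_eq_left h, max_eq_right (by linarith)]; ring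
    simp only
    rw [← mul_sub, this]
  have hcmp : (∫ θ in (0:ℝ)..(2*π), K θ * max (-(v θ)) 0)
      ≤ ∫ θ in (0:ℝ)..(2*π), K θ * max (v θ) 0 := by linarith [hrep, hsplit.symm.le, hsplit.le]
  set Ip : ℝ := ∫ θ in (0:ℝ)..(2*π), max (v θ) 0 with hIp
  set Im : ℝ := ∫ θ in (0:ℝ)..(2*π), max (-(v θ)) 0 with hIm
  have hIp0 : 0 ≤ Ip :=
    intervalIntegral.integral_nonneg (by linarith) (fun θ _ => le_max_right _ _)
  have hlow : δ/2 * Im ≤ ∫ θ in (0:ℝ)..(2*π), K θ * max (-(v θ)) 0 := by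
    rw [hIm, ← intervalIntegral.integral_const_mul]
    apply intervalIntegral.integral_mono_on (by linarith)
      ((continuous_const.mul ((hvcont.neg).max continuous_const)).intervalIntegrable 0 (2*π)) hkm
    intro θ _
    exact mul_le_mul_of_nonneg_right (hKlb θ) (le_max_right _ _)
  have hup : (∫ θ in (0:ℝ)..(2*π), K θ * max (v θ) 0) ≤ 2/δ * Ip := by
    rw [hIp, ← intervalIntegral.integral_const_mul]
    apply intervalIntegral.integral_mono_on (by linarith) hkp
      ((continuous_const.mul (hvcont.max continuous_const)).intervalIntegrable 0 (2*π))
    intro θ _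
    exact mul_le_mul_of_nonneg_right (hKub θ) (le_max_right _ _)
  have hchain : δ/2 * Im ≤ 2/δ * Ip := le_trans hlow (le_trans hcmp hup)
  have hkey : Im ≤ (2/δ)^2 * Ip := by
    have h2δ : (0:ℝ) ≤ 2/δ := by positivity
    have h := mul_le_mul_of_nonneg_left hchain h2δ
    calc Im = (2/δ) * (δ/2 * Im) := by field_simp
      _ ≤ (2/δ) * (2/δ * Ip) := h
      _ = (2/δ)^2 * Ip := by ring
  constructor
  · calc (1/(2*π)) * Im ≤ (1/(2*π)) * ((2/δ)^2 * Ip) := by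
          apply mul_le_mul_of_nonneg_left hkey (by positivity)
      _ = (2/δ)^2 * ((1/(2*π)) * Ip) := by ring
  · have habs : (∫ θ in (0:ℝ)..(2*π), |v θ|) = Ip + Im := by
      rw [hIp, hIm, ← intervalIntegral.integral_add hip him]
      apply intervalIntegral.integral_congr
      intro θ _
      show |v θ| = max (v θ) 0 + max (-(v θ)) 0
      rcases le_total (v θ) 0 with h | h
      · rw [abs_of_nonpos h, max_eq_right h, max_eq_left (by linarith)]; ring
      · rw [abs_of_nonneg h, max_eq_left h, max_eq_right (by linarith)]; ring
    rw [habs]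
    have h4 : (2/δ)^2 = 4/δ^2 := by rw [div_pow]; norm_num
    rw [h4] at hkey
    have hpos : (0:ℝ) < 1/(2*π) := by positivity
    calc (1/(2*π)) * (Ip + Im) ≤ (1/(2*π)) * (Ip + 4/δ^2 * Ip) := by
          apply mul_le_mul_of_nonneg_left (by linarith) hpos.le
      _ = (1 + 4/δ^2) * ((1/(2*π)) * Ip) := by ring
end

section
/- Let z_j = κr·e^{2πij/N}, j = 1,…,N, and let P_j(z) = P(z, z_j) be the Poisson kernel of the disk |z| < r. Then for every z with |z| = r, |(1/N)·Σ_{j=1}^N P_j(z) - 1| ≤ C/(δ²N), where δ = 1 - κ ∈ (0,1) and C is an absolute constant. -/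
open Real

namespace Stmt14Aux

open Finset

noncomputable def zet (N : ℕ) : ℂ := Complex.exp (2 * Real.pi * Complex.I / N)

lemma reA (u v : ℂ) (h : u - v ≠ 0) :
    ((u + v) / (u - v)).re =
      ((‖u‖) ^ 2 - (‖v‖) ^ 2) / (‖u - v‖) ^ 2 := by
  have h0 : Complex.normSq (u - v) ≠ 0 := (Complex.normSq_pos.mpr h).ne'
  rw [Complex.div_re, Complex.sq_norm, Complex.sq_norm, Complex.sq_norm, ← add_div]
  congr 1
  simp only [Complex.normSq_apply, Complex.add_re, Complex.add_im, Complex.sub_re,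
    Complex.sub_im]
  ring

lemma zet_pow_N {N : ℕ} (hN : 0 < N) : (zet N) ^ N = 1 := by
  have hN0 : (N : ℂ) ≠ 0 := Nat.cast_ne_zero.mpr hN.ne'
  rw [zet, ← Complex.exp_nat_mul,
    show (N : ℂ) * (2 * Real.pi * Complex.I / N) = 2 * Real.pi * Complex.I by
      field_simp]
  exact Complex.exp_two_pi_mul_I

lemma zet_pow_ne_one {N k : ℕ} (hk0 : 0 < k) (hkN : k < N) : (zet N) ^ k ≠ 1 := by
  have hN : 0 < N := hk0.trans hkN
  have hN0 : (N : ℂ) ≠ 0 := Nat.cast_ne_zero.mpr hN.ne'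
  rw [zet, ← Complex.exp_nat_mul]
  intro h
  rw [Complex.exp_eq_one_iff] at h
  obtain ⟨n, hn⟩ := h
  have h2 : (2 * (Real.pi : ℂ) * Complex.I) ≠ 0 := by
    simp [Real.pi_ne_zero, Complex.I_ne_zero]
  have hkn : (k : ℂ) = (n : ℂ) * N := by
    field_simp at hn
    have : (k : ℂ) * (2 * (Real.pi : ℂ) * Complex.I) =
        ((n : ℂ) * N) * (2 * (Real.pi : ℂ) * Complex.I) := by
      rw [hn]; ring
    exact mul_right_cancel₀ h2 this
  have hkz : (k : ℤ) = n * N := by exact_mod_cast hkn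
  have h1 : (0 : ℤ) < k := by exact_mod_cast hk0
  have h3 : (k : ℤ) < N := by exact_mod_cast hkN
  have hNz : (0 : ℤ) < N := by exact_mod_cast hN
  have hn0 : 0 < n := by
    by_contra hcon
    push_neg at hcon
    nlinarith
  nlinarith [mul_le_mul_of_nonneg_right (by linarith : (1:ℤ) ≤ n) hNz.le]

lemma sum_zet_pow {N k : ℕ} (hk0 : 0 < k) (hkN : k < N) :
    ∑ j : Fin N, ((zet N) ^ k) ^ (j : ℕ) = 0 := by
  rw [Fin.sum_univ_eq_sum_range (fun j => ((zet N) ^ k) ^ j) N]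
  rw [geom_sum_eq (zet_pow_ne_one hk0 hkN)]
  have : ((zet N) ^ k) ^ N = 1 := by
    rw [← pow_mul, mul_comm, pow_mul, zet_pow_N (hk0.trans hkN), one_pow]
  rw [this, sub_self, zero_div]

section main
variable {N : ℕ} {a : ℝ} {z : ℂ}

lemma abs_c (ha : 0 < a) (j : ℕ) :
    ‖(a : ℂ) * (zet N) ^ j‖ = a := by
  have habs : ‖zet N‖ = 1 := by
    rw [zet, show (2 * (Real.pi : ℂ) * Complex.I / N) = ((2 * Real.pi / N : ℝ) : ℂ) * Complex.I
      by push_cast; ring]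
    exact Complex.norm_exp_ofReal_mul_I _
  rw [norm_mul, norm_pow, habs, one_pow, mul_one, Complex.norm_real, Real.norm_eq_abs, abs_of_pos ha]

lemma den_ne (ha : 0 < a) (hz : a < ‖z‖) (j : ℕ) :
    z - (a : ℂ) * (zet N) ^ j ≠ 0 := by
  intro h
  have := abs_c (a := a) (N := N) ha j
  rw [sub_eq_zero] at h
  rw [← h] at this
  exact absurd this (by linarith)

lemma c_pow_N (hN : 0 < N) (j : ℕ) :
    ((a : ℂ) * (zet N) ^ j) ^ N = (a : ℂ) ^ N := by
  rw [mul_pow, ← pow_mul, mul_comm j N, pow_mul, zet_pow_N hN, one_pow, mul_one]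

lemma pow_den_ne (hN : 0 < N) (ha : 0 < a) (hz : a < ‖z‖) :
    z ^ N - (a : ℂ) ^ N ≠ 0 := by
  intro h
  rw [sub_eq_zero] at h
  have h1 : ‖z ^ N‖ = ‖(a : ℂ) ^ N‖ := by rw [h]
  rw [norm_pow, norm_pow, Complex.norm_real, Real.norm_eq_abs, abs_of_pos ha] at h1
  have h2 : a ^ N < ‖z‖ ^ N := pow_lt_pow_left₀ hz ha.le hN.ne'
  linarith

lemma sum_inv (hN : 0 < N) (ha : 0 < a) (hz : a < ‖z‖) :
    ∑ j : Fin N, (1 : ℂ) / (z - (a : ℂ) * (zet N) ^ (j : ℕ)) =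
      N * z ^ (N - 1) / (z ^ N - (a : ℂ) ^ N) := by
  have hA := pow_den_ne hN ha hz
  have hden : ∀ j : ℕ, z - (a : ℂ) * (zet N) ^ j ≠ 0 := fun j => den_ne ha hz j
  have hterm : ∀ j : ℕ, (1 : ℂ) / (z - (a : ℂ) * (zet N) ^ j) =
      (∑ i ∈ range N, z ^ i * ((a : ℂ) * (zet N) ^ j) ^ (N - 1 - i)) /
        (z ^ N - (a : ℂ) ^ N) := by
    intro j
    rw [div_eq_div_iff (hden j) hA, one_mul, geom_sum₂_mul, c_pow_N hN]
  have hsum : ∑ j : Fin N, (1 : ℂ) / (z - (a : ℂ) * (zet N) ^ (j : ℕ)) =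
      (∑ j : Fin N, ∑ i ∈ range N, z ^ i * ((a : ℂ) * (zet N) ^ (j : ℕ)) ^ (N - 1 - i)) /
        (z ^ N - (a : ℂ) ^ N) := by
    rw [sum_div]
    exact Finset.sum_congr rfl fun j _ => hterm j
  rw [hsum]
  congr 1
  rw [Finset.sum_comm]
  obtain ⟨M, rfl⟩ : ∃ M, N = M + 1 := ⟨N - 1, (Nat.succ_pred_eq_of_pos hN).symm⟩
  rw [Finset.sum_range_succ]
  have hlast : ∑ j : Fin (M + 1), z ^ M * ((a : ℂ) * (zet (M + 1)) ^ (j : ℕ)) ^ (M + 1 - 1 - M)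
      = (M + 1 : ℕ) * z ^ (M + 1 - 1) := by
    have : M + 1 - 1 - M = 0 := by omega
    simp [this, mul_comm]
  have hzero : ∀ i ∈ range M,
      ∑ j : Fin (M + 1), z ^ i * ((a : ℂ) * (zet (M + 1)) ^ (j : ℕ)) ^ (M + 1 - 1 - i) = 0 := by
    intro i hi
    rw [mem_range] at hi
    set k := M + 1 - 1 - i with hk
    have hk0 : 0 < k := by omega
    have hkN : k < M + 1 := by omega
    have : ∀ j : Fin (M + 1), z ^ i * ((a : ℂ) * (zet (M + 1)) ^ (j : ℕ)) ^ k
        = (z ^ i * (a : ℂ) ^ k) * (((zet (M + 1)) ^ k) ^ (j : ℕ)) := by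
      intro j
      rw [mul_pow, ← pow_mul, mul_comm (j : ℕ) k, pow_mul]
      ring
    rw [Finset.sum_congr rfl fun j _ => this j, ← Finset.mul_sum,
      sum_zet_pow hk0 hkN, mul_zero]
  rw [Finset.sum_eq_zero hzero, zero_add, hlast]

lemma sum_frac (hN : 0 < N) (ha : 0 < a) (hz : a < ‖z‖) :
    ∑ j : Fin N, (z + (a : ℂ) * (zet N) ^ (j : ℕ)) / (z - (a : ℂ) * (zet N) ^ (j : ℕ)) =
      N * (z ^ N + (a : ℂ) ^ N) / (z ^ N - (a : ℂ) ^ N) := by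
  have hA := pow_den_ne hN ha hz
  have hden : ∀ j : ℕ, z - (a : ℂ) * (zet N) ^ j ≠ 0 := fun j => den_ne ha hz j
  have hterm : ∀ j : ℕ, (z + (a : ℂ) * (zet N) ^ j) / (z - (a : ℂ) * (zet N) ^ j)
      = 2 * z * ((1 : ℂ) / (z - (a : ℂ) * (zet N) ^ j)) - 1 := by
    intro j
    field_simp [hden j]
    ring
  have h1 : (∑ j : Fin N, (z + (a : ℂ) * (zet N) ^ (j : ℕ)) / (z - (a : ℂ) * (zet N) ^ (j : ℕ)))
      = ∑ j : Fin N, (2 * z * ((1 : ℂ) / (z - (a : ℂ) * (zet N) ^ (j : ℕ))) - 1) :=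
    Finset.sum_congr rfl fun j _ => hterm (j : ℕ)
  rw [h1, Finset.sum_sub_distrib, ← Finset.mul_sum, sum_inv hN ha hz]
  simp only [Finset.sum_const, Finset.card_univ, Fintype.card_fin, nsmul_eq_mul, mul_one]
  have hzpow : z * z ^ (N - 1) = z ^ N := by
    rw [← pow_succ']
    congr 1
    omega
  field_simp
  ring_nf
  rw [mul_assoc (N : ℂ) z, hzpow]
  ring

end main

end Stmt14Aux

/-- Discretization error for the Poisson kernel: there is an absolute constant `C > 0`
such that for equally spaced points `z_j = κr e^{2πij/N}` on the circle `|w| = κr`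
(`κ = 1 - δ`, `0 < δ < 1`), and every `z` with `|z| = r`,
`|(1/N) Σ_j P(z, z_j) - 1| ≤ C/(δ² N)`, where `P(z,w) = (r² - |w|²)/|z - w|²`. -/
theorem stmt14 :
    ∃ C > (0 : ℝ), ∀ (N : ℕ), 1 ≤ N → ∀ r δ : ℝ, 0 < r → 0 < δ → δ < 1 →
      ∀ z : ℂ, ‖z‖ = r →
        |(1 / (N : ℝ)) * ∑ j : Fin N,
            (r ^ 2 - ‖((1 - δ) * r : ℝ) *
              Complex.exp (2 * Real.pi * Complex.I * (j : ℕ) / N)‖ ^ 2) /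
            ‖z - ((1 - δ) * r : ℝ) *
              Complex.exp (2 * Real.pi * Complex.I * (j : ℕ) / N)‖ ^ 2
          - 1| ≤ C / (δ ^ 2 * N) := by
  refine ⟨2, by norm_num, ?_⟩
  intro N hN r δ hr hδ0 hδ1 z hz
  have hN0 : 0 < N := hN
  have hNR : (1 : ℝ) ≤ (N : ℝ) := by exact_mod_cast hN
  set a : ℝ := (1 - δ) * r with ha_def
  have hκ0 : 0 < 1 - δ := by linarith
  have ha : 0 < a := mul_pos hκ0 hr
  have har : a < r := by nlinarith
  have haz : a < ‖z‖ := by rw [hz]; exact har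
  set A : ℂ := (a : ℂ) ^ N with hA_def
  set D : ℂ := z ^ N - A with hD_def
  have hD : D ≠ 0 := Stmt14Aux.pow_den_ne hN0 ha haz
  -- rewrite exponentials
  have hexp : ∀ j : ℕ,
      Complex.exp (2 * Real.pi * Complex.I * j / N) = (Stmt14Aux.zet N) ^ j := by
    intro j
    rw [Stmt14Aux.zet, ← Complex.exp_nat_mul]
    congr 1
    ring
  -- each summand is a real part
  have hsummand : ∀ j : Fin N,
      (r ^ 2 - ‖((1 - δ) * r : ℝ) *
        Complex.exp (2 * Real.pi * Complex.I * (j : ℕ) / N)‖ ^ 2) /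
      ‖z - ((1 - δ) * r : ℝ) *
        Complex.exp (2 * Real.pi * Complex.I * (j : ℕ) / N)‖ ^ 2
      = ((z + (a : ℂ) * (Stmt14Aux.zet N) ^ (j : ℕ)) /
          (z - (a : ℂ) * (Stmt14Aux.zet N) ^ (j : ℕ))).re := by
    intro j
    rw [hexp (j : ℕ)]
    rw [Stmt14Aux.reA z ((a : ℂ) * (Stmt14Aux.zet N) ^ (j : ℕ))
      (Stmt14Aux.den_ne ha haz (j : ℕ))]
    rw [Stmt14Aux.abs_c ha, hz]
  -- compute the average exactly
  have havg : (1 / (N : ℝ)) * ∑ j : Fin N,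
      (r ^ 2 - ‖((1 - δ) * r : ℝ) *
        Complex.exp (2 * Real.pi * Complex.I * (j : ℕ) / N)‖ ^ 2) /
      ‖z - ((1 - δ) * r : ℝ) *
        Complex.exp (2 * Real.pi * Complex.I * (j : ℕ) / N)‖ ^ 2
      = ((z ^ N + A) / D).re := by
    rw [Finset.sum_congr rfl fun j _ => hsummand j]
    rw [← Complex.re_sum]
    rw [Stmt14Aux.sum_frac hN0 ha haz]
    have hNC : ((N : ℂ) * ((z ^ N + A) / D)).re = (N : ℝ) * ((z ^ N + A) / D).re := by
      simp [Complex.mul_re]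
    rw [show (N : ℂ) * (z ^ N + A) / D = (N : ℂ) * ((z ^ N + A) / D) by ring, hNC]
    field_simp
  rw [havg]
  -- the error term
  have herr : ((z ^ N + A) / D).re - 1 = ((2 * A) / D).re := by
    have : (z ^ N + A) / D - 1 = (2 * A) / D := by
      field_simp [hD_def]
      ring
    rw [← this, Complex.sub_re, Complex.one_re]
  rw [herr]
  have habsA : ‖A‖ = a ^ N := by
    rw [hA_def, norm_pow, Complex.norm_real, Real.norm_eq_abs, abs_of_pos ha]
  have habsD : r ^ N - a ^ N ≤ ‖D‖ := by
    have h1 : ‖z ^ N‖ - ‖A‖ ≤ ‖z ^ N - A‖ := by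
      exact norm_sub_norm_le _ _
    rw [norm_pow, hz, habsA] at h1
    exact h1
  have hra : 0 < r ^ N - a ^ N :=
    sub_pos.mpr (pow_lt_pow_left₀ har ha.le hN0.ne')
  have hbound : |((2 * A) / D).re| ≤ 2 * a ^ N / (r ^ N - a ^ N) := by
    calc |((2 * A) / D).re| ≤ ‖(2 * A) / D‖ := Complex.abs_re_le_norm _
    _ = 2 * a ^ N / ‖D‖ := by
        rw [norm_div, norm_mul, habsA]
        norm_num
    _ ≤ 2 * a ^ N / (r ^ N - a ^ N) := by
        apply div_le_div_of_nonneg_left _ hra habsD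
        positivity
  refine hbound.trans ?_
  -- final numeric estimate
  have haN : a ^ N = (1 - δ) ^ N * r ^ N := by rw [ha_def, mul_pow]
  set κ : ℝ := 1 - δ with hκ_def
  have hκ1 : κ < 1 := by linarith
  have hkκ : κ ^ N ≤ κ := pow_le_of_le_one hκ0.le hκ1.le hN0.ne'
  have hbern : κ ^ N * ((N : ℝ) * δ) ≤ 1 := by
    have hx : (0 : ℝ) ≤ δ / κ := by positivity
    have h1 : 1 + (N : ℝ) * (δ / κ) ≤ (1 + δ / κ) ^ N := one_add_mul_le_pow (by linarith) N
    have h2 : (1 + δ / κ) = 1 / κ := by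
      field_simp
      linarith
    have h3 : (N : ℝ) * δ ≤ (1 / κ) ^ N := by
      rw [← h2]
      refine le_trans ?_ h1
      have : δ ≤ δ / κ := by
        rw [le_div_iff₀ hκ0]
        nlinarith
      nlinarith
    have h4 : κ ^ N * (1 / κ) ^ N = 1 := by
      rw [← mul_pow]
      field_simp
      simp
    calc κ ^ N * ((N : ℝ) * δ) ≤ κ ^ N * (1 / κ) ^ N :=
          mul_le_mul_of_nonneg_left h3 (by positivity)
    _ = 1 := h4
  have hrN : (0 : ℝ) < r ^ N := by positivity
  rw [haN, div_le_div_iff₀ (by nlinarith) (by positivity)]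
  nlinarith [mul_le_mul_of_nonneg_left hbern (by positivity : (0:ℝ) ≤ 2 * δ * r ^ N),
    mul_le_mul_of_nonneg_left hkκ hrN.le, mul_pos hδ0 hrN]
end

section
/- Let f(z) = Σₙ φₙ aₙ zⁿ with (φₙ) independent standard complex Gaussians, aₙ > 0, a₀ = 1, and the series convergent on |z| ≤ r. Then P( max_{|z|≤r} |f(z)| ≤ 1 ) ≤ ∏_{n : aₙrⁿ ≥ 1} (aₙ rⁿ)⁻² = exp(-S(r)), where S(r) = 2·Σ_{n : aₙrⁿ ≥ 1} log(aₙ rⁿ). -/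
set_option maxHeartbeats 1000000
open MeasureTheory Real ProbabilityTheory
open scoped ENNReal NNReal

noncomputable def stdComplexGaussian : Measure ℂ :=
  volume.withDensity (fun z => ENNReal.ofReal ((1 / π) * Real.exp (-(‖z‖) ^ 2)))


lemma gauss_exp_integrable : Integrable (fun z : ℂ => Real.exp (-(‖z‖)^2/2)) volume := by
  have h1 : Integrable (fun x : ℝ => Real.exp (-(1/2 : ℝ) * x^2)) volume :=
    integrable_exp_neg_mul_sq (by norm_num)
  have h2 := h1.mul_prod h1
  have h3 := (Complex.volume_preserving_equiv_real_prod.integrable_comp_emb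
    Complex.measurableEquivRealProd.measurableEmbedding).mpr h2
  have heq : ((fun p : ℝ × ℝ => Real.exp (-(1/2 : ℝ) * p.1^2) * Real.exp (-(1/2 : ℝ) * p.2^2)) ∘
      Complex.measurableEquivRealProd) = fun z : ℂ => Real.exp (-(‖z‖)^2/2) := by
    funext z
    simp only [Function.comp_apply, Complex.measurableEquivRealProd,
      ← Real.exp_add, Complex.sq_norm, Complex.normSq_apply]
    norm_num
    ring_nf
  rwa [heq] at h3

lemma gauss_moment : (∫⁻ z : ℂ, (‖z‖₊ : ℝ≥0∞) ∂stdComplexGaussian) < ⊤ := by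
  have hdens : Measurable fun z : ℂ => ENNReal.ofReal ((1 / π) * Real.exp (-(‖z‖) ^ 2)) := by
    apply Measurable.ennreal_ofReal
    exact measurable_const.mul (((continuous_norm.pow 2).neg.rexp).measurable)
  rw [stdComplexGaussian, lintegral_withDensity_eq_lintegral_mul _
    hdens (by measurability)]
  have hb : ∀ z : ℂ, ENNReal.ofReal ((1 / π) * Real.exp (-(‖z‖) ^ 2)) * (‖z‖₊ : ℝ≥0∞)
      ≤ ENNReal.ofReal (Real.exp (-(‖z‖)^2/2)) := by
    intro z
    rw [← ENNReal.ofReal_coe_nnreal, coe_nnnorm,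
      ← ENNReal.ofReal_mul (by positivity)]
    apply ENNReal.ofReal_le_ofReal
    set t := ‖z‖ with htdef
    have ht : 0 ≤ t := norm_nonneg z
    have e1 : Real.exp (-t^2) = Real.exp (-t^2/2) * Real.exp (-t^2/2) := by
      rw [← Real.exp_add]; ring_nf
    have h3 : t ≤ Real.exp (t^2/2) := by
      have := Real.add_one_le_exp (t^2/2)
      nlinarith [sq_nonneg (t-1)]
    have e2 : t * Real.exp (-t^2/2) ≤ 1 := by
      have h4 : Real.exp (-t^2/2) = (Real.exp (t^2/2))⁻¹ := by
        rw [← Real.exp_neg]; ring_nf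
      rw [h4]
      calc t * (Real.exp (t^2/2))⁻¹ ≤ Real.exp (t^2/2) * (Real.exp (t^2/2))⁻¹ :=
            mul_le_mul_of_nonneg_right h3 (by positivity)
        _ = 1 := mul_inv_cancel₀ (Real.exp_pos _).ne'
    have hE1 : (0:ℝ) < Real.exp (-t^2/2) := Real.exp_pos _
    have hE2 : Real.exp (-t^2/2) ≤ 1 := Real.exp_le_one_iff.mpr (by nlinarith)
    have hpi : (1:ℝ)/π ≤ 1 := by
      rw [div_le_one Real.pi_pos]
      linarith [Real.pi_gt_three]
    calc (1/π) * Real.exp (-t^2) * t = (1/π) * ((t * Real.exp (-t^2/2)) * Real.exp (-t^2/2)) := by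
          rw [e1]; ring
      _ ≤ 1 * (1 * Real.exp (-t^2/2)) := by
          apply mul_le_mul hpi _ (by positivity) (by norm_num)
          exact mul_le_mul_of_nonneg_right e2 hE1.le
      _ = Real.exp (-t^2/2) := by ring
  calc (∫⁻ z : ℂ, (fun w => ENNReal.ofReal ((1 / π) * Real.exp (-(‖w‖) ^ 2)) * ‖w‖₊) z ∂volume)
      ≤ ∫⁻ z : ℂ, ENNReal.ofReal (Real.exp (-(‖z‖)^2/2)) ∂volume :=
        lintegral_mono fun z => hb z
    _ < ⊤ := by
        have := gauss_exp_integrable.hasFiniteIntegral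
        rwa [hasFiniteIntegral_iff_ofReal (Filter.Eventually.of_forall fun z => (Real.exp_pos _).le)] at this

lemma gauss_ball {t : ℝ} (ht : 0 ≤ t) :
    stdComplexGaussian (Metric.closedBall 0 t) ≤ ENNReal.ofReal (t ^ 2) := by
  rw [stdComplexGaussian, withDensity_apply _ measurableSet_closedBall]
  have h1 : ∫⁻ z in Metric.closedBall (0:ℂ) t, ENNReal.ofReal ((1 / π) * Real.exp (-(‖z‖) ^ 2)) ∂volume
      ≤ ∫⁻ _ in Metric.closedBall (0:ℂ) t, ENNReal.ofReal (1 / π) ∂volume := by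
    apply setLIntegral_mono' measurableSet_closedBall
    intro z _
    apply ENNReal.ofReal_le_ofReal
    have h := Real.exp_le_one_iff.mpr (neg_nonpos.mpr (sq_nonneg (‖z‖)))
    exact mul_le_of_le_one_right (by positivity) h
  refine h1.trans ?_
  rw [setLIntegral_const, Complex.volume_closedBall]
  have hpi : (NNReal.pi : ℝ≥0∞) = ENNReal.ofReal π := by
    rw [← ENNReal.ofReal_coe_nnreal]
    norm_num [NNReal.coe_real_pi]
  rw [hpi, ← ENNReal.ofReal_pow ht]
  rw [← ENNReal.ofReal_mul (by positivity), ← ENNReal.ofReal_mul (by positivity)]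
  apply ENNReal.ofReal_le_ofReal
  rw [mul_comm (t^2) π, ← mul_assoc, one_div, inv_mul_cancel₀ Real.pi_pos.ne', one_mul]


lemma cauchy_coeff_le (c : ℕ → ℂ) {r : ℝ} (hr : 0 < r)
    (hc : Summable fun n => ‖c n‖ * r ^ n)
    (hb : ∀ z : ℂ, ‖z‖ ≤ r → ‖∑' n, c n * z ^ n‖ ≤ 1) (n : ℕ) :
    ‖c n‖ * r ^ n ≤ 1 := by
  set p := FormalMultilinearSeries.ofScalars ℂ c with hp
  have hnorm : ∀ m, ‖p m‖ = ‖c m‖ := fun m => by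
    rw [hp, FormalMultilinearSeries.ofScalars_norm]
  have hrad : (r.toNNReal : ENNReal) ≤ p.radius := by
    apply p.le_radius_of_summable
    simpa [hnorm, Real.coe_toNNReal _ hr.le] using hc
  have hpos : 0 < p.radius :=
    lt_of_lt_of_le (by exact_mod_cast Real.toNNReal_pos.mpr hr) hrad
  have hball := p.hasFPowerSeriesOnBall hpos
  have hfval : ∀ z : ℂ, p.sum z = ∑' m, c m * z ^ m := fun z =>
    tsum_congr fun m => by
      rw [hp, FormalMultilinearSeries.ofScalars_apply_eq, smul_eq_mul]
  have hmem : ∀ z : ℂ, ‖z‖ < r → z ∈ Metric.eball (0 : ℂ) p.radius := by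
    intro z hz
    rw [Metric.mem_eball, edist_zero_right, enorm_eq_nnnorm]
    refine lt_of_lt_of_le ?_ hrad
    have : ‖z‖₊ < r.toNNReal := by
      rw [← norm_toNNReal]
      exact (Real.toNNReal_lt_toNNReal_iff hr).mpr hz
    exact_mod_cast this
  have hb' : ∀ z : ℂ, ‖z‖ ≤ r → ‖p.sum z‖ ≤ 1 := fun z hz => by
    rw [hfval]; exact hb z hz
  have key : ∀ R : NNReal, 0 < R → (R : ℝ) < r →
      ‖c n‖ * (R : ℝ) ^ n ≤ 1 := by
    intro R hR0 hRr
    have hdiff : DiffContOnCl ℂ p.sum (Metric.ball (0 : ℂ) (R : ℝ)) := by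
      constructor
      · intro z hz
        rw [Metric.mem_ball, dist_zero_right] at hz
        exact ((hball.analyticAt_of_mem (hmem z (hz.trans hRr))).differentiableAt).differentiableWithinAt
      · intro z hz
        have hz' : ‖z‖ ≤ (R : ℝ) := by
          have := Metric.closure_ball_subset_closedBall hz
          rwa [Metric.mem_closedBall, dist_zero_right] at this
        exact ((hball.analyticAt_of_mem (hmem z (lt_of_le_of_lt hz' hRr))).continuousAt).continuousWithinAt
    have h2 := hdiff.hasFPowerSeriesOnBall hR0
    have heq : p = cauchyPowerSeries p.sum 0 R :=
      hball.hasFPowerSeriesAt.eq_formalMultilinearSeries h2.hasFPowerSeriesAt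
    have hcirc : ∀ θ : ℝ, ‖circleMap 0 (R : ℝ) θ‖ ≤ r := fun θ => by
      rw [norm_circleMap_zero, abs_of_nonneg R.coe_nonneg]
      exact hRr.le
    have hcont : Continuous fun θ : ℝ => ‖p.sum (circleMap 0 (R : ℝ) θ)‖ := by
      rw [continuous_iff_continuousAt]
      intro θ
      have hmemθ : circleMap 0 (R : ℝ) θ ∈ Metric.eball (0 : ℂ) p.radius := by
        apply hmem
        calc ‖circleMap 0 (R : ℝ) θ‖ = |(R : ℝ)| := by
              rw [norm_circleMap_zero]
          _ = (R : ℝ) := abs_of_nonneg R.coe_nonneg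
          _ < r := hRr
      exact (((hball.analyticAt_of_mem hmemθ).continuousAt).comp
        (continuous_circleMap 0 (R : ℝ)).continuousAt).norm
    have hint : (∫ θ in (0:ℝ)..2 * π, ‖p.sum (circleMap 0 (R : ℝ) θ)‖) ≤ 2 * π := by
      have h1 : (∫ θ in (0:ℝ)..2 * π, ‖p.sum (circleMap 0 (R : ℝ) θ)‖) ≤
          ∫ _ in (0:ℝ)..2 * π, (1 : ℝ) := by
        apply intervalIntegral.integral_mono_on Real.two_pi_pos.le
          (hcont.intervalIntegrable _ _) intervalIntegrable_const
        intro θ _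
        exact hb' _ (hcirc θ)
      simpa using h1
    have hcp := norm_cauchyPowerSeries_le p.sum 0 (R : ℝ) n
    rw [← heq] at hcp
    have hInn : (0:ℝ) ≤ ∫ θ in (0:ℝ)..2 * π, ‖p.sum (circleMap 0 (R : ℝ) θ)‖ :=
      intervalIntegral.integral_nonneg Real.two_pi_pos.le fun _ _ => norm_nonneg _
    have hRpos : (0:ℝ) < (R : ℝ) := hR0
    calc ‖c n‖ * (R : ℝ) ^ n = ‖p n‖ * (R : ℝ) ^ n := by rw [hnorm]
      _ ≤ (((2 * π)⁻¹ * ∫ θ in (0:ℝ)..2 * π, ‖p.sum (circleMap 0 (R : ℝ) θ)‖) * |(R : ℝ)|⁻¹ ^ n) * (R : ℝ) ^ n :=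
          mul_le_mul_of_nonneg_right hcp (pow_nonneg hRpos.le n)
      _ = (2 * π)⁻¹ * (∫ θ in (0:ℝ)..2 * π, ‖p.sum (circleMap 0 (R : ℝ) θ)‖) := by
          rw [abs_of_pos hRpos, mul_assoc, ← mul_pow, inv_mul_cancel₀ hRpos.ne', one_pow, mul_one]
      _ ≤ (2 * π)⁻¹ * (2 * π) :=
          mul_le_mul_of_nonneg_left hint (by positivity)
      _ = 1 := inv_mul_cancel₀ Real.two_pi_pos.ne'
  -- limit argument
  have hev : ∀ᶠ t in nhdsWithin r (Set.Iio r), ‖c n‖ * t ^ n ≤ 1 := by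
    have h1 : ∀ᶠ t in nhdsWithin r (Set.Iio r), (0:ℝ) < t :=
      eventually_nhdsWithin_of_eventually_nhds (eventually_gt_nhds hr)
    have h2 : ∀ᶠ t in nhdsWithin r (Set.Iio r), t < r := eventually_mem_nhdsWithin
    filter_upwards [h1, h2] with t ht0 htr
    have := key t.toNNReal (by simp [Real.toNNReal_pos, ht0]) (by rwa [Real.coe_toNNReal _ ht0.le])
    rwa [Real.coe_toNNReal _ ht0.le] at this
  have htend : Filter.Tendsto (fun t : ℝ => ‖c n‖ * t ^ n)
      (nhdsWithin r (Set.Iio r)) (nhds (‖c n‖ * r ^ n)) :=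
    ((continuous_const.mul (continuous_pow n)).tendsto r).mono_left nhdsWithin_le_nhds
  exact le_of_tendsto htend hev


/-- If `f(z) = Σ φₙ aₙ zⁿ` with independent standard complex Gaussian `φₙ`, `aₙ > 0`,
`a₀ = 1`, then `P(max_{|z| ≤ r} |f| ≤ 1) ≤ ∏_{aₙ rⁿ ≥ 1} (aₙ rⁿ)⁻² = exp (-S(r))`. -/
theorem stmt17 {Ω : Type*} [MeasurableSpace Ω] (P : Measure Ω) [IsProbabilityMeasure P]
    (φ : ℕ → Ω → ℂ) (hmeas : ∀ n, Measurable (φ n))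
    (hindep : iIndepFun φ P)
    (hgauss : ∀ n, P.map (φ n) = stdComplexGaussian)
    (a : ℕ → ℝ) (ha : ∀ n, 0 < a n) (ha0 : a 0 = 1)
    (r : ℝ) (hr : 1 ≤ r) (hsum : Summable (fun n => a n * r ^ n))
    (hfin : {n : ℕ | 1 ≤ a n * r ^ n}.Finite) :
    P {ω | ∀ z : ℂ, ‖z‖ ≤ r →
        ‖∑' n : ℕ, φ n ω * (a n : ℂ) * z ^ n‖ ≤ 1} ≤
      ENNReal.ofReal (∏ n ∈ hfin.toFinset, ((a n * r ^ n) ^ 2)⁻¹) ∧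
    ∏ n ∈ hfin.toFinset, ((a n * r ^ n) ^ 2)⁻¹ =
      Real.exp (-(2 * ∑ n ∈ hfin.toFinset, Real.log (a n * r ^ n))) := by
  have hr0 : (0:ℝ) < r := lt_of_lt_of_le one_pos hr
  have hx : ∀ n, 0 < a n * r ^ n := fun n => mul_pos (ha n) (pow_pos hr0 n)
  constructor
  · -- probability bound
    set G : Set Ω := {ω | Summable fun n => ‖φ n ω‖ * (a n * r ^ n)} with hG
    set A : Set Ω :=
      ⋂ n ∈ hfin.toFinset, φ n ⁻¹' Metric.closedBall (0:ℂ) ((a n * r ^ n)⁻¹) with hA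
    -- G is almost sure
    have hmeast : Measurable fun ω => ∑' n, (‖φ n ω‖₊ : ℝ≥0∞) * ENNReal.ofReal (a n * r ^ n) :=
      Measurable.ennreal_tsum fun n => ((hmeas n).nnnorm.coe_nnreal_ennreal.mul_const _)
    have hlint : (∫⁻ ω, (∑' n, (‖φ n ω‖₊ : ℝ≥0∞) * ENNReal.ofReal (a n * r ^ n)) ∂P) ≠ ⊤ := by
      rw [lintegral_tsum fun n => ((hmeas n).nnnorm.coe_nnreal_ennreal.mul_const _).aemeasurable]
      have hterm : ∀ n, (∫⁻ ω, (‖φ n ω‖₊ : ℝ≥0∞) * ENNReal.ofReal (a n * r ^ n) ∂P)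
          = (∫⁻ z : ℂ, (‖z‖₊ : ℝ≥0∞) ∂stdComplexGaussian) * ENNReal.ofReal (a n * r ^ n) := by
        intro n
        rw [lintegral_mul_const _ (hmeas n).nnnorm.coe_nnreal_ennreal, ← hgauss n,
          lintegral_map measurable_nnnorm.coe_nnreal_ennreal (hmeas n)]
      simp only [hterm]
      rw [ENNReal.tsum_mul_left]
      apply ENNReal.mul_ne_top gauss_moment.ne
      rw [← ENNReal.ofReal_tsum_of_nonneg (fun n => (hx n).le) hsum]
      exact ENNReal.ofReal_ne_top
    have hGnull : P Gᶜ = 0 := by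
      apply measure_mono_null _ (ae_iff.mp (ae_lt_top hmeast hlint))
      intro ω hω
      have hns : ¬ Summable (fun n => ‖φ n ω‖ * (a n * r ^ n)) := hω
      simp only [Set.mem_setOf_eq, not_lt, top_le_iff]
      by_contra hne
      apply hns
      have hs2 := ENNReal.summable_toReal hne
      refine hs2.congr fun n => ?_
      rw [ENNReal.toReal_mul, ENNReal.coe_toReal, coe_nnnorm,
        ENNReal.toReal_ofReal (hx n).le]
    -- event inclusion
    have hincl : {ω | ∀ z : ℂ, ‖z‖ ≤ r →
        ‖∑' n : ℕ, φ n ω * (a n : ℂ) * z ^ n‖ ≤ 1} ⊆ A ∪ Gᶜ := by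
      intro ω hω
      by_cases hg : ω ∈ G
      · left
        simp only [hA, Set.mem_iInter, Set.mem_preimage, Metric.mem_closedBall,
          dist_zero_right]
        intro n _
        have hcsum : Summable (fun m => ‖φ m ω * (a m : ℂ)‖ * r ^ m) := by
          refine Summable.congr hg fun m => ?_
          rw [norm_mul, Complex.norm_real, Real.norm_of_nonneg (ha m).le]
          ring
        have hcau := cauchy_coeff_le (fun m => φ m ω * (a m : ℂ)) hr0 hcsum hω n
        have h1 : ‖φ n ω‖ * (a n * r ^ n) ≤ 1 := by
          rw [norm_mul, Complex.norm_real, Real.norm_of_nonneg (ha n).le] at hcau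
          calc ‖φ n ω‖ * (a n * r ^ n)
              = ‖φ n ω‖ * a n * r ^ n := by ring
            _ ≤ 1 := hcau
        rw [← one_div]
        exact (le_div_iff₀ (hx n)).mpr h1
      · right; exact hg
    -- independence product
    have hprod : P A = ∏ n ∈ hfin.toFinset,
        P (φ n ⁻¹' Metric.closedBall (0:ℂ) ((a n * r ^ n)⁻¹)) := by
      exact hindep.measure_inter_preimage_eq_mul hfin.toFinset
        (sets := fun n => Metric.closedBall (0:ℂ) ((a n * r ^ n)⁻¹))
        fun i _ => measurableSet_closedBall
    have hfac : ∀ n ∈ hfin.toFinset,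
        P (φ n ⁻¹' Metric.closedBall (0:ℂ) ((a n * r ^ n)⁻¹))
          ≤ ENNReal.ofReal (((a n * r ^ n) ^ 2)⁻¹) := by
      intro n _
      rw [← Measure.map_apply (hmeas n) measurableSet_closedBall, hgauss n]
      have := gauss_ball (t := (a n * r ^ n)⁻¹) (inv_nonneg.mpr (hx n).le)
      rwa [inv_pow] at this
    calc P {ω | ∀ z : ℂ, ‖z‖ ≤ r →
          ‖∑' n : ℕ, φ n ω * (a n : ℂ) * z ^ n‖ ≤ 1}
        ≤ P (A ∪ Gᶜ) := measure_mono hincl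
      _ ≤ P A + P Gᶜ := measure_union_le _ _
      _ = P A := by rw [hGnull, add_zero]
      _ = ∏ n ∈ hfin.toFinset,
            P (φ n ⁻¹' Metric.closedBall (0:ℂ) ((a n * r ^ n)⁻¹)) := hprod
      _ ≤ ∏ n ∈ hfin.toFinset, ENNReal.ofReal (((a n * r ^ n) ^ 2)⁻¹) :=
          Finset.prod_le_prod' hfac
      _ = ENNReal.ofReal (∏ n ∈ hfin.toFinset, ((a n * r ^ n) ^ 2)⁻¹) :=
          (ENNReal.ofReal_prod_of_nonneg fun i _ => by positivity).symm
  · -- identity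
    have hlog : ∀ n ∈ hfin.toFinset, ((a n * r ^ n) ^ 2)⁻¹
        = Real.exp (-(2 * Real.log (a n * r ^ n))) := by
      intro n _
      rw [Real.exp_neg]
      congr 1
      rw [two_mul, Real.exp_add, Real.exp_log (hx n), sq]
    rw [Finset.prod_congr rfl hlog, ← Real.exp_sum]
    congr 1
    rw [Finset.mul_sum]
    simp
end
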